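/- arXiv:2201.02013 — 3 statements merged into one kernel-verified Lean document; each statement's English description precedes it below -/
import Mathlib

section
/- For every integer n ≥ 2 there exists a triple (c_0, c_1, c_2) ∈ Z_4 × Z_{2n} × Z_{2n²} such that the code C_n(c_0,c_1,c_2) has size at least (2^n − 2)/(16 n³) (hence redundancy at most 3·log₂ n + 4 up to a vanishing term) and is list-decodable for single-deletion single-substitution with list size 2, i.e., every y ∈ {0,1}^{n−1} lies in the single-deletion single-substitution error ball of at most two codewords of C_n(c_0,c_1,c_2). -/
/-- The bit of `x` at 1-based position `p` (junk value `0` out of range). -/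
def getBit {n : ℕ} (x : Fin n → Fin 2) (p : ℕ) : Fin 2 :=
  if h : p - 1 < n then x ⟨p - 1, h⟩ else 0

/-- Hamming weight of a binary sequence. -/
def wt {n : ℕ} (x : Fin n → Fin 2) : ℕ := ∑ i, (x i : ℕ)

/-- The `j`-th order VT syndrome `f_j(x) = Σ_{i=1}^n (Σ_{ℓ=1}^i ℓ^{j-1}) x_i`. -/
def vtSyn {n : ℕ} (j : ℕ) (x : Fin n → Fin 2) : ℕ :=
  ∑ i : Fin n, (∑ l ∈ Finset.Icc 1 ((i : ℕ) + 1), l ^ (j - 1)) * (x i : ℕ)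

/-- Substitute the symbol at 1-based position `e` of `x` with its complement. -/
def substAt {n : ℕ} (x : Fin n → Fin 2) (e : ℕ) : Fin n → Fin 2 :=
  fun i => if (i : ℕ) + 1 = e then 1 - x i else x i

/-- Delete the symbol at 1-based position `d` of `x`. -/
def delAt {n : ℕ} (x : Fin n → Fin 2) (d : ℕ) : Fin (n - 1) → Fin 2 :=
  fun i => if (i : ℕ) + 1 < d then getBit x ((i : ℕ) + 1) else getBit x ((i : ℕ) + 2)

/-- `E(x,d,e)`: delete the symbol at position `d` and substitute the symbol at
position `e` of `x` (positions are 1-based, taken in the original `x`). -/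
def delSub {n : ℕ} (x : Fin n → Fin 2) (d e : ℕ) : Fin (n - 1) → Fin 2 :=
  delAt (substAt x e) d

/-- The single-deletion single-substitution error ball `B_{1,1}(x)`. -/
def ball {n : ℕ} (x : Fin n → Fin 2) : Set (Fin (n - 1) → Fin 2) :=
  {y | (∃ d ∈ Finset.Icc 1 n, y = delAt x d) ∨
       ∃ d ∈ Finset.Icc 1 n, ∃ e ∈ Finset.Icc 1 n, d ≠ e ∧ y = delSub x d e}

/-- The code `C_n(c0,c1,c2)`. -/
def codeC (n : ℕ) (c0 c1 c2 : ℕ) : Finset (Fin n → Fin 2) :=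
  Finset.univ.filter fun x =>
    x ≠ (fun _ => 0) ∧ x ≠ (fun _ => 1) ∧
    wt x % 4 = c0 ∧ vtSyn 1 x % (2 * n) = c1 ∧ vtSyn 2 x % (2 * n ^ 2) = c2

/-- `u_i = Σ_{ℓ=i}^n x_ℓ − Σ_{ℓ=i}^n x'_ℓ` (1-based positions, value in `ℤ`). -/
def uSeq {n : ℕ} (x x' : Fin n → Fin 2) (i : ℕ) : ℤ :=
  (∑ l ∈ Finset.Icc i n, ((getBit x l : ℕ) : ℤ)) -
    ∑ l ∈ Finset.Icc i n, ((getBit x' l : ℕ) : ℤ)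

namespace SDSS
open Finset

def bz {m : ℕ} (x : Fin m → Fin 2) (j : ℕ) : ℤ := ((getBit x j : ℕ) : ℤ)

lemma bz01 {m : ℕ} (x : Fin m → Fin 2) (j : ℕ) : bz x j = 0 ∨ bz x j = 1 := by
  unfold bz getBit
  split
  · have := (x ⟨j - 1, by omega⟩).isLt
    omega
  · left; rfl

lemma bz_nonneg {m : ℕ} (x : Fin m → Fin 2) (j : ℕ) : 0 ≤ bz x j := by
  rcases bz01 x j with h | h <;> omega

lemma bz_le_one {m : ℕ} (x : Fin m → Fin 2) (j : ℕ) : bz x j ≤ 1 := by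
  rcases bz01 x j with h | h <;> omega

lemma bz_eq_zero_of_gt {m : ℕ} (x : Fin m → Fin 2) {j : ℕ} (h : m < j) : bz x j = 0 := by
  unfold bz getBit
  rw [dif_neg (by omega)]
  rfl

lemma getBit_coe {m : ℕ} (x : Fin m → Fin 2) (i : Fin m) : getBit x ((i : ℕ) + 1) = x i := by
  simp only [getBit, Nat.add_sub_cancel, i.isLt, dif_pos, Fin.eta]

lemma sum_fin {M : Type*} [AddCommMonoid M] (f : ℕ → M) :
    ∀ m : ℕ, ∑ i : Fin m, f ((i : ℕ) + 1) = ∑ j ∈ Ioc 0 m, f j := by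
  intro m
  induction m with
  | zero => simp
  | succ m ih =>
    rw [Fin.sum_univ_castSucc, Finset.sum_Ioc_succ_top (Nat.zero_le m)]
    simp only [Fin.coe_castSucc, Fin.val_last, ih]

lemma wt_eq {m : ℕ} (x : Fin m → Fin 2) : (wt x : ℤ) = ∑ j ∈ Ioc 0 m, bz x j := by
  rw [wt, Nat.cast_sum, ← sum_fin (f := fun j => bz x j)]
  exact Finset.sum_congr rfl fun i _ => by rw [bz, getBit_coe]

lemma f1_eq {m : ℕ} (x : Fin m → Fin 2) :
    (vtSyn 1 x : ℤ) = ∑ j ∈ Ioc 0 m, (j : ℤ) * bz x j := by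
  rw [vtSyn, Nat.cast_sum, ← sum_fin (f := fun j => (j : ℤ) * bz x j)]
  refine Finset.sum_congr rfl fun i _ => ?_
  rw [bz, getBit_coe]
  push_cast
  simp [Nat.card_Icc]

lemma gauss : ∀ m : ℕ, 2 * ∑ l ∈ Ioc 0 m, (l : ℤ) = (m : ℤ) * ((m : ℤ) + 1) := by
  intro m
  induction m with
  | zero => simp
  | succ m ih =>
    rw [Finset.sum_Ioc_succ_top (Nat.zero_le m), mul_add, ih]
    push_cast
    ring

lemma gaussN (m : ℕ) : ((∑ l ∈ Ioc 0 m, l : ℕ) : ℤ) * 2 = (m : ℤ) * ((m : ℤ) + 1) := by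
  rw [Nat.cast_sum]
  have := gauss m
  linarith

lemma f2_eq {m : ℕ} (x : Fin m → Fin 2) :
    2 * (vtSyn 2 x : ℤ) = ∑ j ∈ Ioc 0 m, (j : ℤ) * ((j : ℤ) + 1) * bz x j := by
  rw [vtSyn, Nat.cast_sum, Finset.mul_sum,
    ← sum_fin (f := fun j => (j : ℤ) * ((j : ℤ) + 1) * bz x j)]
  refine Finset.sum_congr rfl fun i _ => ?_
  have hc : ∑ l ∈ Finset.Icc 1 ((i : ℕ) + 1), l ^ (2 - 1) = ∑ l ∈ Ioc 0 ((i : ℕ) + 1), l := by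
    rw [← Finset.Icc_add_one_left_eq_Ioc]
    simp
  rw [hc, bz, getBit_coe]
  have h2 := gaussN ((i : ℕ) + 1)
  push_cast at h2 ⊢
  linear_combination (((x i : ℕ) : ℤ)) * h2

end SDSS
namespace SDSS
open Finset

variable {n : ℕ}

/-- Suffix sums of `y` over positions `> d` (1-based). -/
def SS (y : Fin (n - 1) → Fin 2) (d : ℕ) : ℤ := ∑ l ∈ Ioc d (n - 1), bz y l

def S1 (y : Fin (n - 1) → Fin 2) (d : ℕ) : ℤ := ∑ l ∈ Ioc d (n - 1), (l : ℤ) * bz y l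

/-- Unified representation: `x` is obtained from `y` by inserting bit `β` at position `d`
and adding `σ ∈ {1,-1}` at position `e` (a flip with direction `σ`). -/
structure Rep (y : Fin (n - 1) → Fin 2) (x : Fin n → Fin 2) (d e : ℕ) (β σ : ℤ) : Prop where
  hd1 : 1 ≤ d
  hdn : d ≤ n
  he1 : 1 ≤ e
  hen : e ≤ n
  hβ : β = 0 ∨ β = 1
  hσ : σ = 1 ∨ σ = -1
  hbit : ∀ i : ℕ, 1 ≤ i → i ≤ n →
    bz x i = (if i < d then bz y i else if i = d then β else bz y (i - 1))
             + (if i = e then σ else 0)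

lemma getBit_delAt (x : Fin n → Fin 2) (d j : ℕ) (h1 : 1 ≤ j) (h2 : j ≤ n - 1) :
    getBit (delAt x d) j = if j < d then getBit x j else getBit x (j + 1) := by
  have hj : j - 1 < n - 1 := by omega
  have e1 : j - 1 + 1 = j := by omega
  have e2 : j - 1 + 2 = j + 1 := by omega
  show (if h : j - 1 < n - 1 then (delAt x d) ⟨j - 1, h⟩ else 0) = _
  rw [dif_pos hj]
  show (if (j - 1) + 1 < d then getBit x ((j - 1) + 1) else getBit x ((j - 1) + 2)) = _
  rw [e1, e2]

lemma getBit_substAt (x : Fin n → Fin 2) (e j : ℕ) (h1 : 1 ≤ j) (h2 : j ≤ n) :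
    getBit (substAt x e) j = if j = e then 1 - getBit x j else getBit x j := by
  have hj : j - 1 < n := by omega
  have e1 : j - 1 + 1 = j := by omega
  show (if h : j - 1 < n then (substAt x e) ⟨j - 1, h⟩ else 0) = _
  rw [dif_pos hj]
  show (if (j - 1) + 1 = e then 1 - x ⟨j - 1, hj⟩ else x ⟨j - 1, hj⟩) = _
  rw [e1]
  have hx : getBit x j = x ⟨j - 1, hj⟩ := by
    show (if h : j - 1 < n then x ⟨j - 1, h⟩ else 0) = _
    rw [dif_pos hj]
  rw [hx]

lemma bz_one_sub {m : ℕ} (x : Fin m → Fin 2) (j : ℕ) (hj : j - 1 < m) :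
    (((1 - getBit x j : Fin 2) : ℕ) : ℤ) = 1 - bz x j := by
  rw [bz]
  unfold getBit
  rw [dif_pos hj]
  rcases Fin.exists_fin_two.mp ⟨x ⟨j - 1, hj⟩, rfl⟩ with h | h <;> rw [h] <;> decide

lemma rep_of_mem_ball {y : Fin (n - 1) → Fin 2} {x : Fin n → Fin 2}
    (h : y ∈ ball x) : ∃ d e β σ, Rep y x d e β σ := by
  rcases h with ⟨d, hd, hy⟩ | ⟨d, hd, e, he, hde, hy⟩
  · -- pure deletion: y = delAt x d
    rw [Finset.mem_Icc] at hd
    have hyb : ∀ j : ℕ, 1 ≤ j → j ≤ n - 1 →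
        bz y j = if j < d then bz x j else bz x (j + 1) := by
      intro j h1 h2
      rw [hy, bz, getBit_delAt x d j h1 h2]
      split <;> rfl
    refine ⟨d, d, 1 - bz x d, 2 * bz x d - 1, hd.1, hd.2, hd.1, hd.2, ?_, ?_, ?_⟩
    · rcases bz01 x d with h | h <;> [right; left] <;> omega
    · rcases bz01 x d with h | h <;> [right; left] <;> omega
    · intro i h1 h2
      rcases lt_trichotomy i d with hc | hc | hc
      · rw [if_pos hc, if_neg (by omega), hyb i h1 (by omega), if_pos hc, add_zero]
      · rw [if_neg (by omega), if_pos hc, if_pos hc]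
        subst hc
        ring
      · rw [if_neg (by omega), if_neg (by omega), if_neg (by omega), add_zero,
          hyb (i - 1) (by omega) (by omega), if_neg (by omega)]
        congr 2
        omega
  · -- deletion + substitution: y = delAt (substAt x e) d
    rw [Finset.mem_Icc] at hd
    rw [Finset.mem_Icc] at he
    set z := substAt x e with hz
    have hxz : ∀ j : ℕ, 1 ≤ j → j ≤ n →
        bz x j = (if j = e then 1 - bz z j else bz z j) := by
      intro j h1 h2
      have : bz z j = if j = e then 1 - bz x j else bz x j := by
        rw [hz, bz, getBit_substAt x e j h1 h2]
        split
        · exact bz_one_sub x j (by omega)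
        · rfl
      split at this <;> split <;> first | omega | (rw [this]; ring) | rw [this]
    have hyb : ∀ j : ℕ, 1 ≤ j → j ≤ n - 1 →
        bz y j = if j < d then bz z j else bz z (j + 1) := by
      intro j h1 h2
      rw [hy, delSub, ← hz, bz, getBit_delAt z d j h1 h2]
      split <;> rfl
    have hzfact : ∀ i : ℕ, 1 ≤ i → i ≤ n →
        (if i < d then bz y i else if i = d then bz z d else bz y (i - 1)) = bz z i := by
      intro i h1 h2
      rcases lt_trichotomy i d with hc | hc | hc
      · rw [if_pos hc, hyb i h1 (by omega), if_pos hc]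
      · rw [if_neg (by omega), if_pos hc, hc]
      · rw [if_neg (by omega), if_neg (by omega), hyb (i - 1) (by omega) (by omega),
          if_neg (by omega)]
        congr 1
        omega
    refine ⟨d, e, bz z d, 1 - 2 * bz z e, hd.1, hd.2, he.1, he.2, ?_, ?_, ?_⟩
    · rcases bz01 z d with h | h <;> [left; right] <;> omega
    · rcases bz01 z e with h | h <;> [left; right] <;> omega
    · intro i h1 h2
      rw [hzfact i h1 h2, hxz i h1 h2]
      by_cases hie : i = e
      · rw [if_pos hie, if_pos hie, hie]
        ring
      · rw [if_neg hie, if_neg hie, add_zero]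

end SDSS
namespace SDSS
open Finset

variable {n : ℕ} {y : Fin (n - 1) → Fin 2} {x : Fin n → Fin 2} {d e : ℕ} {β σ : ℤ}

lemma sum_Ioc_shift (f : ℕ → ℤ) (a b : ℕ) (ha : 1 ≤ a) :
    ∑ i ∈ Ioc a b, f (i - 1) = ∑ j ∈ Ioc (a - 1) (b - 1), f j := by
  refine Finset.sum_nbij' (fun i => i - 1) (fun j => j + 1) ?_ ?_ ?_ ?_ ?_
  · intro t ht; rw [Finset.mem_Ioc] at *; omega
  · intro t ht; rw [Finset.mem_Ioc] at *; omega
  · intro t ht; rw [Finset.mem_Ioc] at ht; omega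
  · intro t ht; rw [Finset.mem_Ioc] at ht; omega
  · intro t ht; rfl

lemma sum_Ico_shift (f : ℕ → ℤ) (a b : ℕ) (ha : 1 ≤ a) :
    ∑ i ∈ Ico a b, f (i - 1) = ∑ j ∈ Ico (a - 1) (b - 1), f j := by
  refine Finset.sum_nbij' (fun i => i - 1) (fun j => j + 1) ?_ ?_ ?_ ?_ ?_
  · intro t ht; rw [Finset.mem_Ico] at *; omega
  · intro t ht; rw [Finset.mem_Ico] at *; omega
  · intro t ht; rw [Finset.mem_Ico] at ht; omega
  · intro t ht; rw [Finset.mem_Ico] at ht; omega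
  · intro t ht; rfl

lemma Ioc_pred_singleton {d : ℕ} (hd : 1 ≤ d) : Ioc (d - 1) d = {d} := by
  ext t
  rw [Finset.mem_Ioc, Finset.mem_singleton]
  omega

/-- Master sum formula for a represented sequence. -/
lemma rep_sum (h : Rep y x d e β σ) (c : ℕ → ℤ) :
    ∑ j ∈ Ioc 0 n, c j * bz x j
      = (∑ j ∈ Ioc 0 (n - 1), c j * bz y j)
        + (∑ j ∈ Ioc (d - 1) (n - 1), (c (j + 1) - c j) * bz y j)
        + c d * β + c e * σ := by
  obtain ⟨hd1, hdn, he1, hen, hβ, hσ, hbit⟩ := h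
  have hsplit : ∀ j ∈ Ioc 0 n, c j * bz x j =
      (c j * (if j < d then bz y j else if j = d then β else bz y (j - 1)))
      + (if j = e then c j * σ else 0) := by
    intro j hj
    rw [Finset.mem_Ioc] at hj
    rw [hbit j hj.1 hj.2, mul_add]
    congr 1
    split <;> simp
  rw [Finset.sum_congr rfl hsplit, Finset.sum_add_distrib, Finset.sum_ite_eq' (Ioc 0 n) e]
  rw [if_pos (by rw [Finset.mem_Ioc]; exact ⟨he1, hen⟩)]
  have e1 : (∑ j ∈ Ioc 0 n, c j * (if j < d then bz y j else if j = d then β else bz y (j - 1)))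
      = (∑ j ∈ Ioc 0 (d - 1), c j * (if j < d then bz y j else if j = d then β else bz y (j - 1)))
      + (∑ j ∈ Ioc (d - 1) d, c j * (if j < d then bz y j else if j = d then β else bz y (j - 1)))
      + (∑ j ∈ Ioc d n, c j * (if j < d then bz y j else if j = d then β else bz y (j - 1))) := by
    rw [Finset.sum_Ioc_consecutive _ (by omega : 0 ≤ d - 1) (by omega : d - 1 ≤ d),
      Finset.sum_Ioc_consecutive _ (by omega : 0 ≤ d) (hdn : d ≤ n)]
  have e2 : (∑ j ∈ Ioc 0 (d - 1), c j * (if j < d then bz y j else if j = d then β else bz y (j - 1)))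
      = ∑ j ∈ Ioc 0 (d - 1), c j * bz y j := by
    refine Finset.sum_congr rfl fun j hj => ?_
    rw [Finset.mem_Ioc] at hj
    rw [if_pos (by omega)]
  have e3 : (∑ j ∈ Ioc (d - 1) d, c j * (if j < d then bz y j else if j = d then β else bz y (j - 1)))
      = c d * β := by
    rw [Ioc_pred_singleton hd1, Finset.sum_singleton, if_neg (by omega), if_pos rfl]
  have e4 : (∑ j ∈ Ioc d n, c j * (if j < d then bz y j else if j = d then β else bz y (j - 1)))
      = ∑ j ∈ Ioc (d - 1) (n - 1), c (j + 1) * bz y j := by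
    have e4a : ∀ j ∈ Ioc d n, c j * (if j < d then bz y j else if j = d then β else bz y (j - 1))
        = (fun t => c (t + 1) * bz y t) (j - 1) := by
      intro j hj
      rw [Finset.mem_Ioc] at hj
      rw [if_neg (by omega), if_neg (by omega)]
      simp only
      congr 2
      omega
    rw [Finset.sum_congr rfl e4a, sum_Ioc_shift (fun t => c (t + 1) * bz y t) d n hd1]
  have e5 : (∑ j ∈ Ioc 0 (n - 1), c j * bz y j)
      = (∑ j ∈ Ioc 0 (d - 1), c j * bz y j) + ∑ j ∈ Ioc (d - 1) (n - 1), c j * bz y j := by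
    rw [Finset.sum_Ioc_consecutive _ (by omega : 0 ≤ d - 1) (by omega : d - 1 ≤ n - 1)]
  have e6 : (∑ j ∈ Ioc (d - 1) (n - 1), (c (j + 1) - c j) * bz y j)
      = (∑ j ∈ Ioc (d - 1) (n - 1), c (j + 1) * bz y j)
        - ∑ j ∈ Ioc (d - 1) (n - 1), c j * bz y j := by
    rw [← Finset.sum_sub_distrib]
    exact Finset.sum_congr rfl fun j _ => by ring
  rw [e1, e2, e3, e4]
  rw [e5, e6]
  ring

lemma rep_wt (h : Rep y x d e β σ) : (wt x : ℤ) = (wt y : ℤ) + β + σ := by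
  have hs := rep_sum h (fun _ => 1)
  simp only [one_mul, sub_self, zero_mul, Finset.sum_const_zero, add_zero] at hs
  rw [wt_eq, wt_eq, hs]

lemma rep_f1 (h : Rep y x d e β σ) :
    (vtSyn 1 x : ℤ) = (vtSyn 1 y : ℤ) + SS y (d - 1) + β * d + σ * e := by
  have hs := rep_sum h (fun j => (j : ℤ))
  have hcorr : (∑ j ∈ Ioc (d - 1) (n - 1), (((j : ℕ) + 1 : ℕ) - (j : ℤ)) * bz y j)
      = SS y (d - 1) := by
    rw [SS]
    refine Finset.sum_congr rfl fun j _ => ?_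
    push_cast
    ring
  rw [f1_eq, f1_eq, hs]
  push_cast at hcorr ⊢
  rw [hcorr]
  ring

lemma rep_f2 (h : Rep y x d e β σ) :
    2 * (vtSyn 2 x : ℤ) = 2 * (vtSyn 2 y : ℤ) + 2 * S1 y (d - 1) + 2 * SS y (d - 1)
      + β * ((d : ℤ) * (d + 1)) + σ * ((e : ℤ) * (e + 1)) := by
  have hs := rep_sum h (fun j => (j : ℤ) * ((j : ℤ) + 1))
  have hcorr : (∑ j ∈ Ioc (d - 1) (n - 1),
        ((((j : ℕ) + 1 : ℕ) : ℤ) * ((((j : ℕ) + 1 : ℕ) : ℤ) + 1) - (j : ℤ) * ((j : ℤ) + 1)) * bz y j)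
      = 2 * S1 y (d - 1) + 2 * SS y (d - 1) := by
    rw [S1, SS, Finset.mul_sum, Finset.mul_sum, ← Finset.sum_add_distrib]
    refine Finset.sum_congr rfl fun j _ => ?_
    push_cast
    ring
  rw [f2_eq, f2_eq, hs]
  push_cast at hcorr ⊢
  rw [hcorr]
  ring

lemma SS_step {a : ℕ} (h1 : 1 ≤ a) (h2 : a ≤ n - 1) (y : Fin (n - 1) → Fin 2) :
    SS y (a - 1) = bz y a + SS y a := by
  rw [SS, SS, show Ioc (a - 1) (n - 1) = insert a (Ioc a (n - 1)) from ?_,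
    Finset.sum_insert (by simp)]
  ext t
  simp only [Finset.mem_Ioc, Finset.mem_insert]
  omega

lemma SS_last (y : Fin (n - 1) → Fin 2) {a : ℕ} (h : n - 1 ≤ a) : SS y a = 0 := by
  rw [SS, Finset.Ioc_eq_empty (by omega), Finset.sum_empty]

/-- Suffix-sum formula. -/
lemma rep_suffix (h : Rep y x d e β σ) :
    ∀ k, k ≤ n → ∑ l ∈ Ioc k n, bz x l
      = (if k < d then SS y k + β else SS y (k - 1)) + (if k < e then σ else 0) := by
  obtain ⟨hd1, hdn, he1, hen, hβ, hσ, hbit⟩ := h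
  suffices H : ∀ m k, n - k = m → k ≤ n → ∑ l ∈ Ioc k n, bz x l
      = (if k < d then SS y k + β else SS y (k - 1)) + (if k < e then σ else 0) by
    intro k hk; exact H (n - k) k rfl hk
  intro m
  induction m with
  | zero =>
    intro k hm hk
    have hkn : k = n := by omega
    rw [Finset.Ioc_eq_empty (by omega), Finset.sum_empty, if_neg (by omega),
      if_neg (by omega), show SS y (k - 1) = 0 from SS_last y (by omega)]
    ring
  | succ m ih =>
    intro k hm hk
    have hkn : k < n := by omega
    have hins : Ioc k n = insert (k + 1) (Ioc (k + 1) n) := by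
      ext t
      simp only [Finset.mem_Ioc, Finset.mem_insert]
      omega
    have ihk := ih (k + 1) (by omega) (by omega)
    have hbitk := hbit (k + 1) (by omega) (by omega)
    have hflip : ((if k + 1 = e then σ else 0) + (if k + 1 < e then σ else 0))
        = (if k < e then σ else 0) := by
      rcases lt_trichotomy (k + 1) e with hc | hc | hc
      · rw [if_neg (by omega), if_pos hc, if_pos (by omega)]; ring
      · rw [if_pos hc, if_neg (by omega), if_pos (by omega)]; ring
      · rw [if_neg (by omega), if_neg (by omega), if_neg (by omega)]; ring
    rw [hins, Finset.sum_insert (by simp), ihk, hbitk]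
    rcases lt_trichotomy (k + 1) d with hc | hc | hc
    · -- k+1 < d
      rw [if_pos hc, if_pos (by omega : k + 1 < d), if_pos (by omega : k < d)]
      have hss : SS y k = bz y (k + 1) + SS y (k + 1) := by
        have := SS_step (a := k + 1) (by omega) (by omega) y
        rwa [show k + 1 - 1 = k from by omega] at this
      rw [hss]
      linarith [hflip]
    · -- k+1 = d
      rw [if_neg (by omega : ¬ (k + 1 < d)), if_pos hc, if_neg (by omega : ¬ (k + 1 < d)),
        show k + 1 - 1 = k from by omega, if_pos (by omega : k < d)]
      linarith [hflip]
    · -- k+1 > d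
      rw [if_neg (by omega : ¬ (k + 1 < d)), if_neg (by omega : ¬ (k + 1 = d)),
        if_neg (by omega : ¬ (k + 1 < d)), show k + 1 - 1 = k from by omega,
        if_neg (by omega : ¬ (k < d)),
        show SS y (k - 1) = bz y k + SS y k from SS_step (by omega) (by omega) y]
      linarith [hflip]

/-- Sum of all suffix sums. -/
lemma rep_suffix_sum (h : Rep y x d e β σ) :
    ∑ k ∈ range n, (∑ l ∈ Ioc k n, bz x l)
      = (∑ k ∈ Ico 0 (n - 1), SS y k) + SS y (d - 1) + β * d + σ * e := by
  have hd1 := h.hd1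
  have hdn := h.hdn
  have he1 := h.he1
  have hen := h.hen
  have hterm : ∀ k ∈ range n, (∑ l ∈ Ioc k n, bz x l)
      = (if k < d then SS y k + β else SS y (k - 1)) + (if k < e then σ else 0) := by
    intro k hk
    rw [Finset.mem_range] at hk
    exact rep_suffix h k (by omega)
  rw [Finset.sum_congr rfl hterm, Finset.sum_add_distrib]
  have hflip : (∑ k ∈ range n, (if k < e then σ else 0)) = σ * e := by
    rw [Finset.range_eq_Ico, ← Finset.sum_Ico_consecutive _ (Nat.zero_le e) hen]
    have h1 : ∀ k ∈ Ico 0 e, (if k < e then σ else 0) = σ := by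
      intro k hk
      rw [Finset.mem_Ico] at hk
      rw [if_pos hk.2]
    have h2 : ∀ k ∈ Ico e n, (if k < e then σ else 0) = 0 := by
      intro k hk
      rw [Finset.mem_Ico] at hk
      rw [if_neg (by omega)]
    rw [Finset.sum_congr rfl h1, Finset.sum_congr rfl h2, Finset.sum_const,
      Finset.sum_const_zero, Nat.card_Ico, nsmul_eq_mul]
    simp only [Nat.sub_zero]
    ring
  have hz : (∑ k ∈ range n, (if k < d then SS y k + β else SS y (k - 1)))
      = (∑ k ∈ Ico 0 (n - 1), SS y k) + SS y (d - 1) + β * d := by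
    rw [Finset.range_eq_Ico, ← Finset.sum_Ico_consecutive _ (Nat.zero_le d) hdn]
    have h1 : ∀ k ∈ Ico 0 d, (if k < d then SS y k + β else SS y (k - 1)) = SS y k + β := by
      intro k hk; rw [Finset.mem_Ico] at hk; rw [if_pos hk.2]
    have h2 : ∀ k ∈ Ico d n, (if k < d then SS y k + β else SS y (k - 1))
        = (fun t => SS y t) (k - 1) := by
      intro k hk; rw [Finset.mem_Ico] at hk; rw [if_neg (by omega)]
    rw [Finset.sum_congr rfl h1, Finset.sum_congr rfl h2, Finset.sum_add_distrib,
      Finset.sum_const, sum_Ico_shift _ d n hd1, Nat.card_Ico, nsmul_eq_mul]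
    have hsplit2 : (∑ k ∈ Ico 0 d, SS y k)
        = (∑ k ∈ Ico 0 (d - 1), SS y k) + SS y (d - 1) := by
      rw [← Finset.sum_Ico_consecutive _ (by omega : 0 ≤ d - 1) (by omega : d - 1 ≤ d)]
      congr 1
      rw [show Ico (d - 1) d = {d - 1} from ?_, Finset.sum_singleton]
      ext t
      rw [Finset.mem_Ico, Finset.mem_singleton]
      omega
    have hsplit3 : (∑ k ∈ Ico 0 (d - 1), SS y k) + (∑ j ∈ Ico (d - 1) (n - 1), SS y j)
        = ∑ k ∈ Ico 0 (n - 1), SS y k := by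
      rw [Finset.sum_Ico_consecutive _ (by omega : 0 ≤ d - 1) (by omega : d - 1 ≤ n - 1)]
    rw [hsplit2]
    simp only [Nat.sub_zero]
    linarith [hsplit3]
  rw [hflip, hz]

end SDSS
namespace SDSS
open Finset

variable {n : ℕ} {y : Fin (n - 1) → Fin 2}
variable {x₁ x₂ : Fin n → Fin 2} {d₁ e₁ d₂ e₂ : ℕ} {β₁ σ₁ β₂ σ₂ : ℤ}

/-- From weight congruence mod 4: the two representations have equal `β` and `σ`. -/
lemma pair_bs (h₁ : Rep y x₁ d₁ e₁ β₁ σ₁) (h₂ : Rep y x₂ d₂ e₂ β₂ σ₂)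
    (hw : (4 : ℤ) ∣ (wt x₁ : ℤ) - (wt x₂ : ℤ)) : β₁ = β₂ ∧ σ₁ = σ₂ := by
  have e1 := rep_wt h₁
  have e2 := rep_wt h₂
  have hd : (4 : ℤ) ∣ (β₁ + σ₁) - (β₂ + σ₂) := by
    have : (wt x₁ : ℤ) - (wt x₂ : ℤ) = (β₁ + σ₁) - (β₂ + σ₂) := by rw [e1, e2]; ring
    rwa [this] at hw
  rcases h₁.hβ with hb1 | hb1 <;> rcases h₂.hβ with hb2 | hb2 <;>
    rcases h₁.hσ with hs1 | hs1 <;> rcases h₂.hσ with hs2 | hs2 <;> subst hb1 <;> subst hb2 <;>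
    subst hs1 <;> subst hs2 <;> simp <;> omega

/-- From the first-syndrome congruence: exact equality of the first syndromes. -/
lemma pair_f1 (hn : 2 ≤ n) (h₁ : Rep y x₁ d₁ e₁ β₁ σ₁) (h₂ : Rep y x₂ d₂ e₂ β₂ σ₂)
    (hββ : β₁ = β₂) (hσσ : σ₁ = σ₂)
    (hd : (2 * (n : ℤ)) ∣ (vtSyn 1 x₁ : ℤ) - (vtSyn 1 x₂ : ℤ)) :
    (vtSyn 1 x₁ : ℤ) = (vtSyn 1 x₂ : ℤ) := by
  -- the difference is the sum over k ∈ range n of suffix-sum differences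
  have key : (vtSyn 1 x₁ : ℤ) - (vtSyn 1 x₂ : ℤ)
      = ∑ k ∈ range n, ((∑ l ∈ Ioc k n, bz x₁ l) - ∑ l ∈ Ioc k n, bz x₂ l) := by
    rw [Finset.sum_sub_distrib, rep_suffix_sum h₁, rep_suffix_sum h₂, rep_f1 h₁, rep_f1 h₂]
    ring
  -- term bounds
  have hd11 := h₁.hd1
  have hd21 := h₂.hd1
  have he11 := h₁.he1
  have he21 := h₂.he1
  have hterm : ∀ k ∈ range n,
      |(∑ l ∈ Ioc k n, bz x₁ l) - ∑ l ∈ Ioc k n, bz x₂ l| ≤ if k = 0 then 0 else 2 := by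
    intro k hk
    rw [Finset.mem_range] at hk
    rcases Nat.eq_zero_or_pos k with hk0 | hk0
    · subst hk0
      rw [if_pos rfl, rep_suffix h₁ 0 (by omega), rep_suffix h₂ 0 (by omega),
        if_pos (by omega : 0 < d₁), if_pos (by omega : 0 < d₂),
        if_pos (by omega : 0 < e₁), if_pos (by omega : 0 < e₂), hββ, hσσ]
      simp
    · rw [if_neg (by omega), rep_suffix h₁ k (by omega), rep_suffix h₂ k (by omega)]
      have hf : |(if k < e₁ then σ₁ else 0) - (if k < e₂ then σ₂ else 0)| ≤ 1 := by
        rw [hσσ, abs_le]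
        have := h₂.hσ
        split_ifs <;> constructor <;> omega
      have hz : |(if k < d₁ then SS y k + β₁ else SS y (k - 1))
          - (if k < d₂ then SS y k + β₂ else SS y (k - 1))| ≤ 1 := by
        rw [hββ, abs_le]
        have hstep : SS y (k - 1) = bz y k + SS y k := SS_step hk0 (by omega) y
        have hby := bz01 y k
        have hb := h₂.hβ
        split_ifs <;> constructor <;> omega
      calc |(if k < d₁ then SS y k + β₁ else SS y (k - 1)) + (if k < e₁ then σ₁ else 0)
            - ((if k < d₂ then SS y k + β₂ else SS y (k - 1)) + (if k < e₂ then σ₂ else 0))|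
          ≤ |(if k < d₁ then SS y k + β₁ else SS y (k - 1))
              - (if k < d₂ then SS y k + β₂ else SS y (k - 1))|
            + |(if k < e₁ then σ₁ else 0) - (if k < e₂ then σ₂ else 0)| := by
            have : (if k < d₁ then SS y k + β₁ else SS y (k - 1)) + (if k < e₁ then σ₁ else 0)
                - ((if k < d₂ then SS y k + β₂ else SS y (k - 1)) + (if k < e₂ then σ₂ else 0))
                = ((if k < d₁ then SS y k + β₁ else SS y (k - 1))
                  - (if k < d₂ then SS y k + β₂ else SS y (k - 1)))
                  + ((if k < e₁ then σ₁ else 0) - (if k < e₂ then σ₂ else 0)) := by ring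
            rw [this]
            exact abs_add_le _ _
        _ ≤ 1 + 1 := add_le_add hz hf
        _ ≤ 2 := by norm_num
  have habs : |(vtSyn 1 x₁ : ℤ) - (vtSyn 1 x₂ : ℤ)| ≤ 2 * (n : ℤ) - 2 := by
    rw [key]
    calc |∑ k ∈ range n, ((∑ l ∈ Ioc k n, bz x₁ l) - ∑ l ∈ Ioc k n, bz x₂ l)|
        ≤ ∑ k ∈ range n, |(∑ l ∈ Ioc k n, bz x₁ l) - ∑ l ∈ Ioc k n, bz x₂ l| :=
          Finset.abs_sum_le_sum_abs _ _
      _ ≤ ∑ k ∈ range n, (if k = 0 then 0 else 2 : ℤ) := Finset.sum_le_sum hterm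
      _ = 2 * (n : ℤ) - 2 := by
          have hsplit : range n = insert 0 (Ioc 0 (n - 1)) := by
            ext t
            simp only [Finset.mem_range, Finset.mem_insert, Finset.mem_Ioc]
            omega
          rw [hsplit, Finset.sum_insert (by simp), if_pos rfl]
          have : ∀ k ∈ Ioc 0 (n - 1), (if k = 0 then 0 else 2 : ℤ) = 2 := by
            intro k hk
            rw [Finset.mem_Ioc] at hk
            rw [if_neg (by omega)]
          rw [Finset.sum_congr rfl this, Finset.sum_const, Nat.card_Ioc, nsmul_eq_mul]
          have : ((n - 1 - 0 : ℕ) : ℤ) = (n : ℤ) - 1 := by omega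
          rw [this]
          ring
  by_contra hne
  have h0 : (vtSyn 1 x₁ : ℤ) - (vtSyn 1 x₂ : ℤ) ≠ 0 := fun hc => hne (by linarith)
  have := Int.le_of_dvd (abs_pos.mpr h0) ((dvd_abs _ _).mpr hd)
  have hn' : (2 : ℤ) ≤ (n : ℤ) := by exact_mod_cast hn
  linarith

lemma SSS1_bounds (hn : 2 ≤ n) (y : Fin (n - 1) → Fin 2) (d : ℕ) (hd : 1 ≤ d) :
    0 ≤ 2 * S1 y (d - 1) + 2 * SS y (d - 1)
    ∧ 2 * S1 y (d - 1) + 2 * SS y (d - 1) ≤ (n : ℤ) * n + n - 2 := by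
  constructor
  · have h1 : 0 ≤ S1 y (d - 1) :=
      Finset.sum_nonneg fun l hl => mul_nonneg (by positivity) (bz_nonneg y l)
    have h2 : 0 ≤ SS y (d - 1) := Finset.sum_nonneg fun l _ => bz_nonneg y l
    linarith
  · have hcomb : 2 * S1 y (d - 1) + 2 * SS y (d - 1)
        = ∑ l ∈ Ioc (d - 1) (n - 1), (2 * (l : ℤ) + 2) * bz y l := by
      rw [S1, SS, Finset.mul_sum, Finset.mul_sum, ← Finset.sum_add_distrib]
      exact Finset.sum_congr rfl fun l _ => by ring
    rw [hcomb]
    calc ∑ l ∈ Ioc (d - 1) (n - 1), (2 * (l : ℤ) + 2) * bz y l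
        ≤ ∑ l ∈ Ioc (d - 1) (n - 1), (2 * (l : ℤ) + 2) := by
          refine Finset.sum_le_sum fun l hl => ?_
          have := bz_le_one y l
          have := bz_nonneg y l
          nlinarith [Nat.cast_nonneg (α := ℤ) l]
      _ ≤ ∑ l ∈ Ioc 0 (n - 1), (2 * (l : ℤ) + 2) := by
          refine Finset.sum_le_sum_of_subset_of_nonneg ?_ ?_
          · exact Finset.Ioc_subset_Ioc (by omega) (le_refl _)
          · intro l _ _
            positivity
      _ = (n : ℤ) * n + n - 2 := by
          rw [Finset.sum_add_distrib, Finset.sum_const, ← Finset.mul_sum, Nat.card_Ioc]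
          have hg := gauss (n - 1)
          have hc : ((n - 1 - 0 : ℕ) : ℤ) = (n : ℤ) - 1 := by omega
          have hc2 : ((n - 1 : ℕ) : ℤ) = (n : ℤ) - 1 := by omega
          rw [nsmul_eq_mul, hc, hg, hc2]
          ring

/-- From the second-syndrome congruence: exact equality of the (doubled) second syndromes. -/
lemma pair_f2 (hn : 2 ≤ n) (h₁ : Rep y x₁ d₁ e₁ β₁ σ₁) (h₂ : Rep y x₂ d₂ e₂ β₂ σ₂)
    (hββ : β₁ = β₂) (hσσ : σ₁ = σ₂)
    (hd : (2 * (n : ℤ) ^ 2) ∣ (vtSyn 2 x₁ : ℤ) - (vtSyn 2 x₂ : ℤ)) :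
    (vtSyn 2 x₁ : ℤ) = (vtSyn 2 x₂ : ℤ) := by
  have key : 2 * (vtSyn 2 x₁ : ℤ) - 2 * (vtSyn 2 x₂ : ℤ)
      = (2 * S1 y (d₁ - 1) + 2 * SS y (d₁ - 1)) - (2 * S1 y (d₂ - 1) + 2 * SS y (d₂ - 1))
        + β₂ * ((d₁ : ℤ) * (d₁ + 1) - (d₂ : ℤ) * (d₂ + 1))
        + σ₂ * ((e₁ : ℤ) * (e₁ + 1) - (e₂ : ℤ) * (e₂ + 1)) := by
    have k1 := rep_f2 h₁
    have k2 := rep_f2 h₂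
    rw [hββ, hσσ] at k1
    rw [k1, k2]
    ring
  have b1 := SSS1_bounds hn y d₁ h₁.hd1
  have b2 := SSS1_bounds hn y d₂ h₂.hd1
  have hT : ∀ m : ℕ, 1 ≤ m → m ≤ n → (2 : ℤ) ≤ (m : ℤ) * (m + 1)
      ∧ (m : ℤ) * (m + 1) ≤ (n : ℤ) * (n + 1) := by
    intro m hm1 hmn
    have c1 : (1 : ℤ) ≤ (m : ℤ) := by exact_mod_cast hm1
    have c2 : (m : ℤ) ≤ (n : ℤ) := by exact_mod_cast hmn
    constructor <;> nlinarith
  have hβb : β₂ = 0 ∨ β₂ = 1 := h₂.hβ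
  have hσb : σ₂ = 1 ∨ σ₂ = -1 := h₂.hσ
  have habs : |2 * (vtSyn 2 x₁ : ℤ) - 2 * (vtSyn 2 x₂ : ℤ)| < 4 * (n : ℤ) ^ 2 := by
    have t1 := hT d₁ h₁.hd1 h₁.hdn
    have t2 := hT d₂ h₂.hd1 h₂.hdn
    have t3 := hT e₁ h₁.he1 h₁.hen
    have t4 := hT e₂ h₂.he1 h₂.hen
    have hn' : (2 : ℤ) ≤ (n : ℤ) := by exact_mod_cast hn
    have hq : 3 * ((n : ℤ) * n + n - 2) < 4 * (n : ℤ) ^ 2 := by nlinarith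
    rw [key, abs_lt]
    rcases hβb with hb | hb <;> rcases hσb with hs | hs <;> subst hb <;> subst hs <;>
      constructor <;>
      linarith [b1.1, b1.2, b2.1, b2.2, t1.1, t1.2, t2.1, t2.2, t3.1, t3.2, t4.1, t4.2]
  have hd2 : (4 * (n : ℤ) ^ 2) ∣ (2 * (vtSyn 2 x₁ : ℤ) - 2 * (vtSyn 2 x₂ : ℤ)) := by
    have : 2 * (vtSyn 2 x₁ : ℤ) - 2 * (vtSyn 2 x₂ : ℤ)
        = 2 * ((vtSyn 2 x₁ : ℤ) - (vtSyn 2 x₂ : ℤ)) := by ring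
    rw [this, show (4 : ℤ) * (n : ℤ) ^ 2 = 2 * (2 * (n : ℤ) ^ 2) from by ring]
    exact mul_dvd_mul_left 2 hd
  have h0 : 2 * (vtSyn 2 x₁ : ℤ) - 2 * (vtSyn 2 x₂ : ℤ) = 0 := by
    by_contra hc
    have := Int.le_of_dvd (abs_pos.mpr hc) ((dvd_abs _ _).mpr hd2)
    linarith [habs]
  linarith

end SDSS
namespace SDSS
open Finset

variable {n : ℕ} {y : Fin (n - 1) → Fin 2} {β σ A : ℤ}

/-- Position of the (virtual) substitution when the insertion is at `δ`. -/
def eZ (y : Fin (n - 1) → Fin 2) (β σ A : ℤ) (δ : ℕ) : ℤ :=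
  σ * (A - SS y (δ - 1) - β * δ)

/-- The (doubled) second-syndrome offset as a function of the insertion position `δ`. -/
def Phi (y : Fin (n - 1) → Fin 2) (β σ A : ℤ) (δ : ℕ) : ℤ :=
  2 * S1 y (δ - 1) + 2 * SS y (δ - 1) + β * (δ * (δ + 1))
    + σ * (eZ y β σ A δ * (eZ y β σ A δ + 1))

/-- The bit sequence (as an integer-valued function) of the candidate determined by `δ`. -/
def Xf (y : Fin (n - 1) → Fin 2) (β σ A : ℤ) (δ : ℕ) (i : ℕ) : ℤ :=
  (if i < δ then bz y i else if i = δ then β else bz y (i - 1))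
    + (if (i : ℤ) = eZ y β σ A δ then σ else 0)

def Sol (y : Fin (n - 1) → Fin 2) (β σ A : ℤ) (δ : ℕ) (x : Fin n → Fin 2) : Prop :=
  1 ≤ δ ∧ δ ≤ n ∧ ∀ i, 1 ≤ i → i ≤ n → bz x i = Xf y β σ A δ i

lemma S1_step {a : ℕ} (h1 : 1 ≤ a) (h2 : a ≤ n - 1) (y : Fin (n - 1) → Fin 2) :
    S1 y (a - 1) = (a : ℤ) * bz y a + S1 y a := by
  rw [S1, S1, show Ioc (a - 1) (n - 1) = insert a (Ioc a (n - 1)) from ?_,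
    Finset.sum_insert (by simp)]
  ext t
  simp only [Finset.mem_Ioc, Finset.mem_insert]
  omega

lemma eZ_step {δ : ℕ} (h1 : 1 ≤ δ) (h2 : δ ≤ n - 1) :
    eZ y β σ A (δ + 1) = eZ y β σ A δ + σ * (bz y δ - β) := by
  rw [eZ, eZ, Nat.add_sub_cancel, SS_step h1 h2 y]
  push_cast
  ring

lemma Phi_step (hβ : β = 0 ∨ β = 1) (hσ : σ = 1 ∨ σ = -1) {δ : ℕ}
    (h1 : 1 ≤ δ) (h2 : δ ≤ n - 1) :
    Phi y β σ A (δ + 1) - Phi y β σ A δ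
      = if bz y δ = β then 0
        else (1 - 2 * β) * (2 * (eZ y β σ A δ - δ - (if σ = 1 - 2 * β then 0 else 1))) := by
  have he := eZ_step (y := y) (β := β) (σ := σ) (A := A) h1 h2
  have hss := SS_step h1 h2 y
  have hs1 := S1_step h1 h2 y
  by_cases hbβ : bz y δ = β
  · rw [if_pos hbβ]
    have he' : eZ y β σ A (δ + 1) = eZ y β σ A δ := by rw [he, hbβ]; ring
    rw [Phi, Phi, Nat.add_sub_cancel, he', hss, hs1, hbβ]
    push_cast
    ring
  · rw [if_neg hbβ]
    have hby : bz y δ = 1 - β := by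
      rcases bz01 y δ with h | h <;> rcases hβ with h' | h' <;> omega
    by_cases hsc : σ = 1 - 2 * β
    · rw [if_pos hsc]
      have he' : eZ y β σ A (δ + 1) = eZ y β σ A δ + 1 := by
        rw [he, hby, hsc]
        rcases hβ with h | h <;> rw [h] <;> ring
      rw [Phi, Phi, Nat.add_sub_cancel, he', hss, hs1, hby, hsc]
      push_cast
      ring
    · rw [if_neg hsc]
      have hsc' : σ = 2 * β - 1 := by rcases hβ with h | h <;> rcases hσ with h' | h' <;> omega
      have he' : eZ y β σ A (δ + 1) = eZ y β σ A δ - 1 := by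
        rw [he, hby, hsc']
        rcases hβ with h | h <;> rw [h] <;> ring
      rw [Phi, Phi, Nat.add_sub_cancel, he', hss, hs1, hby, hsc']
      push_cast
      ring

lemma eZ_anti (hβ : β = 0 ∨ β = 1) (hσ : σ = 1 ∨ σ = -1) {δ₁ δ₂ : ℕ}
    (h1 : 1 ≤ δ₁) (h12 : δ₁ ≤ δ₂) (h2n : δ₂ ≤ n) :
    eZ y β σ A δ₂ - δ₂ ≤ eZ y β σ A δ₁ - δ₁ := by
  induction δ₂, h12 using Nat.le_induction with
  | base => exact le_refl _
  | succ b hb ih =>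
    have hstep : eZ y β σ A (b + 1) = eZ y β σ A b + σ * (bz y b - β) :=
      eZ_step (by omega) (by omega)
    have hbz := bz01 y b
    have hle : eZ y β σ A (b + 1) - (b + 1 : ℕ) ≤ eZ y β σ A b - b := by
      rw [hstep]
      push_cast
      rcases hβ with h | h <;> rcases hσ with h' | h' <;> rw [h, h'] <;> rcases hbz with hb2 | hb2 <;>
        rw [hb2] <;> ring_nf <;> omega
    exact le_trans hle (ih (by omega))

lemma telescope (g : ℕ → ℤ) {a b : ℕ} (hab : a ≤ b) :
    ∑ δ ∈ Ico a b, (g (δ + 1) - g δ) = g b - g a := by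
  induction b, hab using Nat.le_induction with
  | base => rw [Finset.Ico_self, Finset.sum_empty]; ring
  | succ b hb ih =>
    rw [show Ico a (b + 1) = insert b (Ico a b) from ?_, Finset.sum_insert (by simp), ih]
    · ring
    · ext t
      simp only [Finset.mem_Ico, Finset.mem_insert]
      omega

lemma exists_pos_neg {s : Finset ℕ} {f : ℕ → ℤ} (h0 : ∑ δ ∈ s, f δ = 0) {t : ℕ} (ht : t ∈ s)
    (htne : f t ≠ 0) : (∃ u ∈ s, 0 < f u) ∧ ∃ v ∈ s, f v < 0 := by
  constructor
  · by_contra hc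
    push_neg at hc
    have h1 : ∀ u ∈ s, f u ≤ 0 := hc
    have h2 : f t < 0 := lt_of_le_of_ne (h1 t ht) htne
    have : ∑ δ ∈ s, f δ < ∑ δ ∈ s, (0 : ℤ) :=
      Finset.sum_lt_sum h1 ⟨t, ht, h2⟩
    rw [Finset.sum_const_zero] at this
    omega
  · by_contra hc
    push_neg at hc
    have h1 : ∀ u ∈ s, (0 : ℤ) ≤ f u := hc
    have h2 : 0 < f t := lt_of_le_of_ne (h1 t ht) (Ne.symm htne)
    have : ∑ δ ∈ s, (0 : ℤ) < ∑ δ ∈ s, f δ :=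
      Finset.sum_lt_sum h1 ⟨t, ht, h2⟩
    rw [Finset.sum_const_zero] at this
    omega

/-- Level-set lemma: among three insertion positions with equal `Phi`,
one of the two gaps must be entirely flat. -/
lemma level (hβ : β = 0 ∨ β = 1) (hσ : σ = 1 ∨ σ = -1) {a b c : ℕ}
    (ha : 1 ≤ a) (hab : a < b) (hbc : b < c) (hcn : c ≤ n)
    (h1 : Phi y β σ A a = Phi y β σ A b) (h2 : Phi y β σ A b = Phi y β σ A c) :
    (∀ δ ∈ Ico a b, Phi y β σ A (δ + 1) = Phi y β σ A δ)
    ∨ (∀ δ ∈ Ico b c, Phi y β σ A (δ + 1) = Phi y β σ A δ) := by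
  by_contra hcon
  push_neg at hcon
  obtain ⟨⟨t1, ht1, ht1ne⟩, ⟨t2, ht2, ht2ne⟩⟩ := hcon
  set cc : ℤ := if σ = 1 - 2 * β then 0 else 1 with hcc
  set J : ℕ → ℤ := fun δ => (1 - 2 * β) * (Phi y β σ A (δ + 1) - Phi y β σ A δ) with hJ
  have hJval : ∀ δ, 1 ≤ δ → δ ≤ n - 1 →
      J δ = 0 ∨ J δ = 2 * (eZ y β σ A δ - δ - cc) := by
    intro δ hδ1 hδ2
    have := Phi_step (y := y) (A := A) hβ hσ hδ1 hδ2
    by_cases hb : bz y δ = β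
    · left
      rw [hJ]
      simp only
      rw [this, if_pos hb, mul_zero]
    · right
      rw [hJ]
      simp only
      rw [this, if_neg hb, ← hcc]
      rcases hβ with h | h <;> rw [h] <;> ring
  have hJne : ∀ δ, Phi y β σ A (δ + 1) ≠ Phi y β σ A δ → J δ ≠ 0 := by
    intro δ hne hc0
    rw [hJ] at hc0
    simp only at hc0
    have hb0 : (1 - 2 * β) ≠ 0 := by rcases hβ with h | h <;> rw [h] <;> norm_num
    rcases mul_eq_zero.mp hc0 with h | h
    · exact hb0 h
    · exact hne (by linarith)
  have hsum1 : ∑ δ ∈ Ico a b, J δ = 0 := by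
    rw [hJ]
    simp only
    rw [← Finset.mul_sum, telescope _ (le_of_lt hab), ← h1]
    ring
  have hsum2 : ∑ δ ∈ Ico b c, J δ = 0 := by
    rw [hJ]
    simp only
    rw [← Finset.mul_sum, telescope _ (le_of_lt hbc), ← h2]
    ring
  obtain ⟨-, ⟨v, hv, hvneg⟩⟩ := exists_pos_neg hsum1 ht1 (hJne t1 ht1ne)
  obtain ⟨⟨u, hu, hupos⟩, -⟩ := exists_pos_neg hsum2 ht2 (hJne t2 ht2ne)
  rw [Finset.mem_Ico] at hv hu
  have hvval := hJval v (by omega) (by omega)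
  have huval := hJval u (by omega) (by omega)
  have hvρ : eZ y β σ A v - v - cc < 0 := by rcases hvval with h | h <;> omega
  have huρ : 0 < eZ y β σ A u - u - cc := by rcases huval with h | h <;> omega
  have := eZ_anti (y := y) (A := A) hβ hσ (show 1 ≤ v by omega) (show v ≤ u by omega)
    (show u ≤ n by omega)
  omega

end SDSS
namespace SDSS
open Finset

variable {n : ℕ} {y : Fin (n - 1) → Fin 2} {β σ A : ℤ}

/-- Evaluation helpers for `Xf`. -/
lemma Xf_lt {δ i : ℕ} (h : i < δ) :
    Xf y β σ A δ i = bz y i + (if (i : ℤ) = eZ y β σ A δ then σ else 0) := by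
  rw [Xf, if_pos h]

lemma Xf_self (δ : ℕ) :
    Xf y β σ A δ δ = β + (if (δ : ℤ) = eZ y β σ A δ then σ else 0) := by
  rw [Xf, if_neg (by omega), if_pos rfl]

lemma Xf_gt {δ i : ℕ} (h : δ < i) :
    Xf y β σ A δ i = bz y (i - 1) + (if (i : ℤ) = eZ y β σ A δ then σ else 0) := by
  rw [Xf, if_neg (by omega), if_neg (by omega)]

/-- A flat step of `Phi` does not change the candidate sequence. -/
lemma flat_step (hβ : β = 0 ∨ β = 1) (hσ : σ = 1 ∨ σ = -1) {δ : ℕ}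
    (h1 : 1 ≤ δ) (h2 : δ ≤ n - 1)
    (hflat : Phi y β σ A (δ + 1) = Phi y β σ A δ) :
    ∀ i : ℕ, Xf y β σ A (δ + 1) i = Xf y β σ A δ i := by
  have he := eZ_step (y := y) (β := β) (σ := σ) (A := A) h1 h2
  have hstep := Phi_step (y := y) (A := A) hβ hσ h1 h2
  rw [hflat, sub_self] at hstep
  by_cases hbβ : bz y δ = β
  · -- frozen step
    have he' : eZ y β σ A (δ + 1) = eZ y β σ A δ := by rw [he, hbβ]; ring
    intro i
    rcases lt_trichotomy i δ with hi | hi | hi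
    · rw [Xf_lt hi, Xf_lt (show i < δ + 1 by omega), he']
    · subst hi
      rw [Xf_self, Xf_lt (show i < i + 1 by omega), he', hbβ]
    · rcases Nat.eq_or_lt_of_le hi with hi2 | hi2
      · rw [← hi2, Xf_self, Xf_gt (show δ < δ + 1 by omega), he', Nat.add_sub_cancel, hbβ]
      · rw [Xf_gt hi2, Xf_gt (show δ < i by omega), he']
  · -- active step
    have hby : bz y δ = 1 - β := by
      rcases bz01 y δ with h | h <;> rcases hβ with h' | h' <;> omega
    rw [if_neg hbβ] at hstep
    have hb0 : (1 - 2 * β) ≠ 0 := by rcases hβ with h | h <;> rw [h] <;> norm_num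
    have hρ : eZ y β σ A δ = δ + (if σ = 1 - 2 * β then 0 else 1) := by
      rcases mul_eq_zero.mp hstep.symm with h | h
      · exact absurd h hb0
      · linarith
    by_cases hsc : σ = 1 - 2 * β
    · -- cc = 0 : eZ δ = δ, eZ (δ+1) = δ+1
      rw [if_pos hsc, add_zero] at hρ
      have he' : eZ y β σ A (δ + 1) = (δ : ℤ) + 1 := by
        rw [he, hby, hρ, hsc]
        rcases hβ with h | h <;> rw [h] <;> ring
      intro i
      rcases lt_trichotomy i δ with hi | hi | hi
      · rw [Xf_lt hi, Xf_lt (show i < δ + 1 by omega), he', hρ,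
          if_neg (show ¬ ((i : ℤ) = (δ : ℤ) + 1) by omega),
          if_neg (show ¬ ((i : ℤ) = (δ : ℤ)) by omega)]
      · subst hi
        rw [Xf_self, Xf_lt (show i < i + 1 by omega), he', hρ,
          if_neg (show ¬ ((i : ℤ) = (i : ℤ) + 1) by omega),
          if_pos (show ((i : ℤ) = (i : ℤ)) from rfl), hby]
        rcases hβ with h | h <;> rw [h] at hsc ⊢ <;> rw [hsc] <;> ring
      · rcases Nat.eq_or_lt_of_le hi with hi2 | hi2
        · rw [← hi2, Xf_self, Xf_gt (show δ < δ + 1 by omega), he', hρ, Nat.add_sub_cancel,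
            if_pos (show (((δ + 1 : ℕ) : ℤ) = (δ : ℤ) + 1) by push_cast; ring),
            if_neg (show ¬ (((δ + 1 : ℕ) : ℤ) = (δ : ℤ)) by omega), hby]
          rcases hβ with h | h <;> rw [h] at hsc ⊢ <;> rw [hsc] <;> ring
        · rw [Xf_gt hi2, Xf_gt (show δ < i by omega), he', hρ,
            if_neg (show ¬ ((i : ℤ) = (δ : ℤ) + 1) by omega),
            if_neg (show ¬ ((i : ℤ) = (δ : ℤ)) by omega)]
    · -- cc = 1 : eZ δ = δ+1, eZ (δ+1) = δ
      rw [if_neg hsc] at hρ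
      have hsc' : σ = 2 * β - 1 := by rcases hβ with h | h <;> rcases hσ with h' | h' <;> omega
      have he' : eZ y β σ A (δ + 1) = (δ : ℤ) := by
        rw [he, hby, hρ, hsc']
        rcases hβ with h | h <;> rw [h] <;> ring
      intro i
      rcases lt_trichotomy i δ with hi | hi | hi
      · rw [Xf_lt hi, Xf_lt (show i < δ + 1 by omega), he', hρ,
          if_neg (show ¬ ((i : ℤ) = (δ : ℤ)) by omega),
          if_neg (show ¬ ((i : ℤ) = (δ : ℤ) + 1) by omega)]
      · subst hi
        rw [Xf_self, Xf_lt (show i < i + 1 by omega), he', hρ,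
          if_pos (show ((i : ℤ) = (i : ℤ)) from rfl),
          if_neg (show ¬ ((i : ℤ) = (i : ℤ) + 1) by omega), hby]
        rcases hβ with h | h <;> rw [h] at hsc' ⊢ <;> rw [hsc'] <;> ring
      · rcases Nat.eq_or_lt_of_le hi with hi2 | hi2
        · rw [← hi2, Xf_self, Xf_gt (show δ < δ + 1 by omega), he', hρ, Nat.add_sub_cancel,
            if_neg (show ¬ (((δ + 1 : ℕ) : ℤ) = (δ : ℤ)) by omega),
            if_pos (show (((δ + 1 : ℕ) : ℤ) = (δ : ℤ) + 1) by push_cast; ring), hby]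
          rcases hβ with h | h <;> rw [h] at hsc' ⊢ <;> rw [hsc'] <;> ring
        · rw [Xf_gt hi2, Xf_gt (show δ < i by omega), he', hρ,
            if_neg (show ¬ ((i : ℤ) = (δ : ℤ)) by omega),
            if_neg (show ¬ ((i : ℤ) = (δ : ℤ) + 1) by omega)]

lemma flat_interval (hβ : β = 0 ∨ β = 1) (hσ : σ = 1 ∨ σ = -1) {a b : ℕ}
    (ha : 1 ≤ a) (hab : a ≤ b) (hbn : b ≤ n)
    (hflat : ∀ δ ∈ Ico a b, Phi y β σ A (δ + 1) = Phi y β σ A δ) :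
    ∀ i : ℕ, Xf y β σ A b i = Xf y β σ A a i := by
  induction b, hab using Nat.le_induction with
  | base => intro i; rfl
  | succ b hb ih =>
    intro i
    have hstep := flat_step (y := y) (A := A) hβ hσ (show 1 ≤ b by omega) (show b ≤ n - 1 by omega)
      (hflat b (by rw [Finset.mem_Ico]; omega)) i
    rw [hstep, ih (by omega) (fun δ hδ => hflat δ (by rw [Finset.mem_Ico] at *; omega))]

lemma bits_ext {x x' : Fin n → Fin 2} (hx : ∀ i, 1 ≤ i → i ≤ n → bz x i = bz x' i) :
    x = x' := by
  funext v
  have hv := v.isLt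
  have h := hx ((v : ℕ) + 1) (by omega) (by omega)
  rw [bz, bz, getBit_coe, getBit_coe] at h
  have h2 : ((x v : ℕ)) = ((x' v : ℕ)) := by exact_mod_cast h
  exact Fin.val_injective h2

lemma sol_eq_of_flat {a b : ℕ} {x x' : Fin n → Fin 2}
    (hβ : β = 0 ∨ β = 1) (hσ : σ = 1 ∨ σ = -1)
    (sa : Sol y β σ A a x) (sb : Sol y β σ A b x') (hab : a ≤ b)
    (hflat : ∀ δ ∈ Ico a b, Phi y β σ A (δ + 1) = Phi y β σ A δ) : x = x' := by
  obtain ⟨ha1, han, hax⟩ := sa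
  obtain ⟨hb1, hbn, hbx⟩ := sb
  have hXf := flat_interval (y := y) (A := A) hβ hσ ha1 hab hbn hflat
  refine bits_ext fun i hi1 hin => ?_
  rw [hax i hi1 hin, hbx i hi1 hin, hXf i]

/-- Key three-point contradiction, assuming ordered insertion positions. -/
lemma key3 (hβ : β = 0 ∨ β = 1) (hσ : σ = 1 ∨ σ = -1) {a b c : ℕ}
    {x1 x2 x3 : Fin n → Fin 2}
    (s1 : Sol y β σ A a x1) (s2 : Sol y β σ A b x2) (s3 : Sol y β σ A c x3)
    (hab : a < b) (hbc : b < c)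
    (hP1 : Phi y β σ A a = Phi y β σ A b) (hP2 : Phi y β σ A b = Phi y β σ A c)
    (h12 : x1 ≠ x2) (h23 : x2 ≠ x3) : False := by
  rcases level (y := y) (A := A) hβ hσ s1.1 hab hbc s3.2.1 hP1 hP2 with hf | hf
  · exact h12 (sol_eq_of_flat hβ hσ s1 s2 (le_of_lt hab) hf)
  · exact h23 (sol_eq_of_flat hβ hσ s2 s3 (le_of_lt hbc) hf)

lemma sol_unique {a : ℕ} {x x' : Fin n → Fin 2}
    (sa : Sol y β σ A a x) (sb : Sol y β σ A a x') : x = x' := by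
  refine bits_ext fun i hi1 hin => ?_
  rw [sa.2.2 i hi1 hin, sb.2.2 i hi1 hin]

/-- No three distinct solutions. -/
lemma no_three (hβ : β = 0 ∨ β = 1) (hσ : σ = 1 ∨ σ = -1) {a b c : ℕ}
    {x1 x2 x3 : Fin n → Fin 2}
    (s1 : Sol y β σ A a x1) (s2 : Sol y β σ A b x2) (s3 : Sol y β σ A c x3)
    (hP1 : Phi y β σ A a = Phi y β σ A b) (hP2 : Phi y β σ A b = Phi y β σ A c)
    (h12 : x1 ≠ x2) (h13 : x1 ≠ x3) (h23 : x2 ≠ x3) : False := by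
  have hab : a ≠ b := fun h => h12 (sol_unique (h ▸ s1) s2)
  have hac : a ≠ c := fun h => h13 (sol_unique (h ▸ s1) s3)
  have hbc : b ≠ c := fun h => h23 (sol_unique (h ▸ s2) s3)
  rcases lt_trichotomy a b with h1 | h1 | h1
  · rcases lt_trichotomy b c with h2 | h2 | h2
    · exact key3 hβ hσ s1 s2 s3 h1 h2 hP1 hP2 h12 h23
    · exact hbc h2
    · rcases lt_trichotomy a c with h3 | h3 | h3
      · exact key3 hβ hσ s1 s3 s2 h3 h2 (hP1.trans hP2) hP2.symm h13 (Ne.symm h23)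
      · exact hac h3
      · exact key3 hβ hσ s3 s1 s2 h3 h1 (hP1.trans hP2).symm hP1 (Ne.symm h13) h12
  · exact hab h1
  · rcases lt_trichotomy a c with h2 | h2 | h2
    · exact key3 hβ hσ s2 s1 s3 h1 h2 hP1.symm (hP1.trans hP2) (Ne.symm h12) h13
    · exact hac h2
    · rcases lt_trichotomy b c with h3 | h3 | h3
      · exact key3 hβ hσ s2 s3 s1 h3 h2 hP2 (hP1.trans hP2).symm h23 (Ne.symm h13)
      · exact hbc h3
      · exact key3 hβ hσ s3 s2 s1 h3 h1 hP2.symm hP1.symm (Ne.symm h23) (Ne.symm h12)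

end SDSS
namespace SDSS
open Finset

variable {n : ℕ}

lemma code_facts {c0 c1 c2 : ℕ} {x : Fin n → Fin 2} (hx : x ∈ codeC n c0 c1 c2) :
    wt x % 4 = c0 ∧ vtSyn 1 x % (2 * n) = c1 ∧ vtSyn 2 x % (2 * n ^ 2) = c2 := by
  rw [codeC, Finset.mem_filter] at hx
  exact ⟨hx.2.2.2.1, hx.2.2.2.2.1, hx.2.2.2.2.2⟩

lemma code_dvd {c0 c1 c2 : ℕ} {u v : Fin n → Fin 2}
    (hu : u ∈ codeC n c0 c1 c2) (hv : v ∈ codeC n c0 c1 c2) :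
    ((4 : ℤ) ∣ (wt u : ℤ) - (wt v : ℤ))
    ∧ ((2 * (n : ℤ)) ∣ (vtSyn 1 u : ℤ) - (vtSyn 1 v : ℤ))
    ∧ ((2 * (n : ℤ) ^ 2) ∣ (vtSyn 2 u : ℤ) - (vtSyn 2 v : ℤ)) := by
  obtain ⟨u1, u2, u3⟩ := code_facts hu
  obtain ⟨v1, v2, v3⟩ := code_facts hv
  refine ⟨?_, ?_, ?_⟩
  · have h : wt v ≡ wt u [MOD 4] := by unfold Nat.ModEq; rw [u1, v1]
    have := Nat.modEq_iff_dvd.mp h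
    push_cast at this ⊢
    convert this using 2
  · have h : vtSyn 1 v ≡ vtSyn 1 u [MOD 2 * n] := by unfold Nat.ModEq; rw [u2, v2]
    have := Nat.modEq_iff_dvd.mp h
    push_cast at this ⊢
    convert this using 2
  · have h : vtSyn 2 v ≡ vtSyn 2 u [MOD 2 * n ^ 2] := by unfold Nat.ModEq; rw [u3, v3]
    have := Nat.modEq_iff_dvd.mp h
    push_cast at this ⊢
    convert this using 2

lemma list_bound (hn : 2 ≤ n) (c0 c1 c2 : ℕ) (y : Fin (n - 1) → Fin 2) :
    {x : Fin n → Fin 2 | x ∈ codeC n c0 c1 c2 ∧ y ∈ ball x}.ncard ≤ 2 := by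
  by_contra hcon
  push_neg at hcon
  rw [Set.two_lt_ncard (Set.toFinite _)] at hcon
  obtain ⟨x1, hx1, x2, hx2, x3, hx3, h12, h13, h23⟩ := hcon
  obtain ⟨hc1, hbl1⟩ := hx1
  obtain ⟨hc2, hbl2⟩ := hx2
  obtain ⟨hc3, hbl3⟩ := hx3
  obtain ⟨d1, e1, β1, σ1, r1⟩ := rep_of_mem_ball hbl1
  obtain ⟨d2, e2, β2, σ2, r2⟩ := rep_of_mem_ball hbl2
  obtain ⟨d3, e3, β3, σ3, r3⟩ := rep_of_mem_ball hbl3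
  obtain ⟨hb12, hs12⟩ := pair_bs r1 r2 (code_dvd hc1 hc2).1
  obtain ⟨hb13, hs13⟩ := pair_bs r1 r3 (code_dvd hc1 hc3).1
  subst hb12; subst hs12; subst hb13; subst hs13
  have hf12 : (vtSyn 1 x1 : ℤ) = (vtSyn 1 x2 : ℤ) :=
    pair_f1 hn r1 r2 rfl rfl (code_dvd hc1 hc2).2.1
  have hf13 : (vtSyn 1 x1 : ℤ) = (vtSyn 1 x3 : ℤ) :=
    pair_f1 hn r1 r3 rfl rfl (code_dvd hc1 hc3).2.1
  have hg12 : (vtSyn 2 x1 : ℤ) = (vtSyn 2 x2 : ℤ) :=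
    pair_f2 hn r1 r2 rfl rfl (code_dvd hc1 hc2).2.2
  have hg13 : (vtSyn 2 x1 : ℤ) = (vtSyn 2 x3 : ℤ) :=
    pair_f2 hn r1 r3 rfl rfl (code_dvd hc1 hc3).2.2
  set A : ℤ := SS y (d1 - 1) + β1 * d1 + σ1 * e1 with hA
  have hsq : σ1 * σ1 = 1 := by rcases r1.hσ with h | h <;> rw [h] <;> ring
  -- the G1-value of each representation equals A
  have hG1 : SS y (d1 - 1) + β1 * d1 + σ1 * e1 = A := hA.symm
  have hG2 : SS y (d2 - 1) + β1 * d2 + σ1 * e2 = A := by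
    have k1 := rep_f1 r1
    have k2 := rep_f1 r2
    rw [hA]
    linarith [hf12]
  have hG3 : SS y (d3 - 1) + β1 * d3 + σ1 * e3 = A := by
    have k1 := rep_f1 r1
    have k3 := rep_f1 r3
    rw [hA]
    linarith [hf13]
  have he : ∀ (d e : ℕ), SS y (d - 1) + β1 * d + σ1 * e = A →
      (e : ℤ) = eZ y β1 σ1 A d := by
    intro d e hG
    rw [eZ, show A - SS y (d - 1) - β1 * d = σ1 * e from by linarith, ← mul_assoc, hsq,
      one_mul]
  have he1' := he d1 e1 hG1
  have he2' := he d2 e2 hG2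
  have he3' := he d3 e3 hG3
  have mkSol : ∀ (x : Fin n → Fin 2) (d e : ℕ), Rep y x d e β1 σ1 →
      ((e : ℤ) = eZ y β1 σ1 A d) → Sol y β1 σ1 A d x := by
    intro x d e r her
    refine ⟨r.hd1, r.hdn, fun i hi1 hin => ?_⟩
    rw [r.hbit i hi1 hin, Xf]
    congr 1
    rw [if_congr (show (i = e) ↔ ((i : ℤ) = eZ y β1 σ1 A d) from by
      rw [← her]; exact (Nat.cast_inj (R := ℤ)).symm) rfl rfl]
  have s1 := mkSol x1 d1 e1 r1 he1'
  have s2 := mkSol x2 d2 e2 r2 he2'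
  have s3 := mkSol x3 d3 e3 r3 he3'
  have hPhi : ∀ (x : Fin n → Fin 2) (d e : ℕ), Rep y x d e β1 σ1 →
      ((e : ℤ) = eZ y β1 σ1 A d) →
      Phi y β1 σ1 A d = 2 * (vtSyn 2 x : ℤ) - 2 * (vtSyn 2 y : ℤ) := by
    intro x d e r her
    rw [Phi, ← her]
    have := rep_f2 r
    linarith
  have hP1 : Phi y β1 σ1 A d1 = Phi y β1 σ1 A d2 := by
    rw [hPhi x1 d1 e1 r1 he1', hPhi x2 d2 e2 r2 he2']
    linarith [hg12]
  have hP2 : Phi y β1 σ1 A d2 = Phi y β1 σ1 A d3 := by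
    rw [hPhi x2 d2 e2 r2 he2', hPhi x3 d3 e3 r3 he3']
    linarith [hg12, hg13]
  exact no_three r1.hβ r1.hσ s1 s2 s3 hP1 hP2 h12 h13 h23

end SDSS
namespace SDSS
open Finset

lemma card_code_choice (n : ℕ) (hn : 2 ≤ n) :
    ∃ c0 c1 c2 : ℕ, c0 < 4 ∧ c1 < 2 * n ∧ c2 < 2 * n ^ 2 ∧
      2 ^ n - 2 ≤ 16 * n ^ 3 * (codeC n c0 c1 c2).card := by
  classical
  set D := (Finset.univ : Finset (Fin n → Fin 2)).filter
    (fun x => x ≠ (fun _ => 0) ∧ x ≠ (fun _ => 1)) with hD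
  set T := (range 4) ×ˢ ((range (2 * n)) ×ˢ (range (2 * n ^ 2))) with hT
  set κ : (Fin n → Fin 2) → ℕ × ℕ × ℕ :=
    fun x => (wt x % 4, (vtSyn 1 x % (2 * n), vtSyn 2 x % (2 * n ^ 2))) with hκ
  have hn2 : 0 < 2 * n := by omega
  have hn22 : 0 < 2 * n ^ 2 := by positivity
  have hmem : ∀ x ∈ D, κ x ∈ T := by
    intro x _
    rw [hκ, hT]
    simp only [Finset.mem_product, Finset.mem_range]
    exact ⟨Nat.mod_lt _ (by omega), Nat.mod_lt _ hn2, Nat.mod_lt _ hn22⟩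
  have hcard := Finset.card_eq_sum_card_fiberwise hmem
  have hfib : ∀ t : ℕ × ℕ × ℕ, D.filter (fun x => κ x = t) = codeC n t.1 t.2.1 t.2.2 := by
    intro t
    ext x
    rw [codeC, hκ, hD, Finset.filter_filter, Finset.mem_filter, Finset.mem_filter]
    simp only [Finset.mem_univ, true_and, Prod.ext_iff]
    tauto
  have hTne : T.Nonempty := by
    refine ⟨(0, 0, 0), ?_⟩
    rw [hT]
    simp only [Finset.mem_product, Finset.mem_range]
    exact ⟨by omega, by omega, by omega⟩
  obtain ⟨t0, ht0T, ht0max⟩ :=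
    Finset.exists_max_image T (fun t => (D.filter (fun x => κ x = t)).card) hTne
  have hsum : D.card ≤ T.card * (D.filter (fun x => κ x = t0)).card := by
    rw [hcard]
    calc ∑ t ∈ T, (D.filter (fun x => κ x = t)).card
        ≤ ∑ _t ∈ T, (D.filter (fun x => κ x = t0)).card :=
          Finset.sum_le_sum fun t ht => ht0max t ht
      _ = T.card * (D.filter (fun x => κ x = t0)).card := by
          rw [Finset.sum_const, smul_eq_mul]
  have hTcard : T.card = 16 * n ^ 3 := by
    rw [hT, Finset.card_product, Finset.card_product, Finset.card_range, Finset.card_range,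
      Finset.card_range]
    ring
  have h01 : (fun _ => (0 : Fin 2) : Fin n → Fin 2) ≠ (fun _ => 1) := by
    intro h
    have := congrFun h ⟨0, by omega⟩
    exact absurd this (by decide)
  have hDcard : D.card = 2 ^ n - 2 := by
    have hDeq : D = Finset.univ \ ({(fun _ => 0), (fun _ => 1)} : Finset (Fin n → Fin 2)) := by
      ext x
      rw [hD, Finset.mem_filter, Finset.mem_sdiff, Finset.mem_insert, Finset.mem_singleton]
      simp only [Finset.mem_univ, true_and]
      tauto
    rw [hDeq, Finset.card_sdiff_of_subset (Finset.subset_univ _)]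
    have hc2 : ({(fun _ => 0), (fun _ => 1)} : Finset (Fin n → Fin 2)).card = 2 := by
      rw [Finset.card_insert_of_notMem (by simpa using h01), Finset.card_singleton]
    rw [hc2]
    congr 1
    simp [Fintype.card_fun]
  rw [hT] at ht0T
  rw [Finset.mem_product, Finset.mem_product, Finset.mem_range, Finset.mem_range,
    Finset.mem_range] at ht0T
  refine ⟨t0.1, t0.2.1, t0.2.2, ht0T.1, ht0T.2.1, ht0T.2.2, ?_⟩
  rw [← hfib t0, ← hDcard, ← hTcard]
  exact hsum

end SDSS

/-- there is a choice of `(c0,c1,c2)` for which `C_n(c0,c1,c2)` has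
size at least `(2^n - 2)/(16 n^3)` and is list-decodable for single-deletion
single-substitution with list size 2. -/
theorem stmt0 (n : ℕ) (hn : 2 ≤ n) :
    ∃ c0 c1 c2 : ℕ, c0 < 4 ∧ c1 < 2 * n ∧ c2 < 2 * n ^ 2 ∧
      ((2 ^ n - 2 : ℝ) / (16 * (n : ℝ) ^ 3) ≤ ((codeC n c0 c1 c2).card : ℝ)) ∧
      ∀ y : Fin (n - 1) → Fin 2,
        {x : Fin n → Fin 2 | x ∈ codeC n c0 c1 c2 ∧ y ∈ ball x}.ncard ≤ 2 := by
  obtain ⟨c0, c1, c2, h0, h1, h2, hcard⟩ := SDSS.card_code_choice n hn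
  refine ⟨c0, c1, c2, h0, h1, h2, ?_, fun y => SDSS.list_bound hn c0 c1 c2 y⟩
  have hpos : (0 : ℝ) < 16 * (n : ℝ) ^ 3 := by positivity
  rw [div_le_iff₀ hpos]
  have hc : ((2 ^ n - 2 : ℕ) : ℝ) ≤ ((16 * n ^ 3 * (codeC n c0 c1 c2).card : ℕ) : ℝ) :=
    Nat.cast_le.mpr hcard
  have h2n : 2 ≤ 2 ^ n := by
    calc 2 = 2 ^ 1 := by norm_num
    _ ≤ 2 ^ n := Nat.pow_le_pow_right (by norm_num) (by omega)
  rw [Nat.cast_sub h2n] at hc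
  push_cast at hc
  nlinarith [hc]
end

section
/- Let n ≥ 2, (c_0, c_1, c_2) ∈ Z_4 × Z_{2n} × Z_{2n²}, and suppose x, x' ∈ C_n(c_0,c_1,c_2) with x ≠ x'. Suppose d_1, e_1, d_2, e_2 ∈ {1,…,n} with d_1 ≠ e_1, d_2 ≠ e_2, d_1 ≤ d_2, and E(x, d_1, e_1) = E(x', d_2, e_2). Then d_1 < e_1 ≤ d_2 and d_1 ≤ e_2 < d_2. -/
-- helpers
lemma fin2_sub_val (v : Fin 2) : ((1 - v : Fin 2) : ℕ) = 1 - (v : ℕ) := by revert v; decide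

lemma fin2_sub_sub (v : Fin 2) : (1 - (1 - v) : Fin 2) = v := by revert v; decide

lemma getBit_eq {n : ℕ} (z : Fin n → Fin 2) (p : ℕ) (h2 : p ≤ n) (h1 : 1 ≤ p) :
    getBit z p = z ⟨p - 1, by omega⟩ := by
  unfold getBit; rw [dif_pos (show p - 1 < n by omega)]

lemma getBit_eq' {n : ℕ} (z : Fin n → Fin 2) (i : Fin n) :
    getBit z ((i : ℕ) + 1) = z i := by
  rw [getBit_eq z _ (by omega) (by omega)]
  congr

lemma getBit_substAt {n : ℕ} (x : Fin n → Fin 2) (e p : ℕ) (h1 : 1 ≤ p) (h2 : p ≤ n) :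
    getBit (substAt x e) p = if p = e then 1 - getBit x p else getBit x p := by
  rw [getBit_eq _ p h2 h1, getBit_eq x p h2 h1, substAt]
  have : p - 1 + 1 = p := by omega
  rw [this]

lemma sum_shift {M : Type*} [AddCommMonoid M] (n : ℕ) (f : ℕ → M) :
    ∑ i : Fin n, f ((i : ℕ) + 1) = ∑ p ∈ Finset.Icc 1 n, f p := by
  rw [Fin.sum_univ_eq_sum_range (fun i => f (i + 1)), ← Finset.Ico_add_one_right_eq_Icc,
    Finset.sum_Ico_eq_sum_range]
  simp [Nat.add_comm]

-- the weighted sum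
def GS (n : ℕ) (c : ℕ → ℤ) (z : Fin n → Fin 2) : ℤ :=
  ∑ p ∈ Finset.Icc 1 n, c p * ((getBit z p : ℕ) : ℤ)

lemma wt_eq (n : ℕ) (z : Fin n → Fin 2) : (wt z : ℤ) = GS n (fun _ => 1) z := by
  rw [wt, GS, ← sum_shift n (fun p => (1 : ℤ) * ((getBit z p : ℕ) : ℤ))]
  push_cast
  simp [getBit_eq']

lemma vtSyn_eq (n j : ℕ) (z : Fin n → Fin 2) :
    (vtSyn j z : ℤ) = GS n (fun p => ∑ l ∈ Finset.Icc 1 p, (l : ℤ) ^ (j - 1)) z := by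
  rw [vtSyn, GS,
    ← sum_shift n (fun p => (∑ l ∈ Finset.Icc 1 p, (l : ℤ) ^ (j - 1)) * ((getBit z p : ℕ) : ℤ))]
  push_cast
  simp [getBit_eq']

lemma bit_le (n : ℕ) (z : Fin n → Fin 2) (p : ℕ) : ((getBit z p : ℕ) : ℤ) ≤ 1 := by
  have := (getBit z p).isLt; omega

lemma bit_nonneg (n : ℕ) (z : Fin n → Fin 2) (p : ℕ) : (0:ℤ) ≤ ((getBit z p : ℕ) : ℤ) := by
  positivity

lemma GS_substAt (n : ℕ) (c : ℕ → ℤ) (x : Fin n → Fin 2) (e : ℕ) (h1 : 1 ≤ e) (h2 : e ≤ n) :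
    GS n c (substAt x e) = GS n c x + c e * (1 - 2 * ((getBit x e : ℕ) : ℤ)) := by
  unfold GS
  have key : ∀ p ∈ Finset.Icc 1 n,
      c p * ((getBit (substAt x e) p : ℕ) : ℤ) - c p * ((getBit x p : ℕ) : ℤ)
      = if p = e then c e * (1 - 2 * ((getBit x e : ℕ) : ℤ)) else 0 := by
    intro p hp
    rw [Finset.mem_Icc] at hp
    rw [getBit_substAt x e p hp.1 hp.2]
    by_cases h : p = e
    · subst h
      rw [if_pos rfl, if_pos rfl, fin2_sub_val]
      have := (getBit x p).isLt
      have hv : ((1 - (getBit x p : ℕ) : ℕ) : ℤ) = 1 - ((getBit x p : ℕ) : ℤ) := by omega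
      rw [hv]; ring
    · rw [if_neg h, if_neg h]; ring
  have := Finset.sum_congr rfl key
  rw [Finset.sum_sub_distrib, Finset.sum_ite_eq' (Finset.Icc 1 n) e
    (fun _ => c e * (1 - 2 * ((getBit x e : ℕ) : ℤ))), if_pos (by simp; omega)] at this
  linarith [this]

lemma sum_shift_Ioc (a b : ℕ) (f : ℕ → ℤ) :
    ∑ q ∈ Finset.Ioc a b, f (q + 1) = ∑ p ∈ Finset.Ioc (a+1) (b+1), f p := by
  rw [← Finset.map_add_right_Ioc a b 1, Finset.sum_map]
  rfl

lemma sum_lb : ∀ (K L : ℕ) (Q : Finset ℕ), Q.card = K → (∀ q ∈ Q, L ≤ q) →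
    ∑ i ∈ Finset.range K, (L + i) ≤ ∑ q ∈ Q, q := by
  intro K
  induction K with
  | zero => simp
  | succ K ih =>
    intro L Q hcard hL
    have hne : Q.Nonempty := Finset.card_pos.mp (by omega)
    have hmQ : Q.min' hne ∈ Q := Q.min'_mem hne
    set m := Q.min' hne with hm
    have hQ' : (Q.erase m).card = K := by rw [Finset.card_erase_of_mem hmQ, hcard]; omega
    have hL' : ∀ q ∈ Q.erase m, m + 1 ≤ q := by
      intro q hq
      have h1 := Finset.min'_le Q q (Finset.mem_of_mem_erase hq)
      have h2 := Finset.ne_of_mem_erase hq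
      omega
    have hih := ih (m + 1) (Q.erase m) hQ' hL'
    have hsum : ∑ q ∈ Q, q = m + ∑ q ∈ Q.erase m, q :=
      (Finset.add_sum_erase Q (fun q => q) hmQ).symm
    have hLm : L ≤ m := hL m hmQ
    calc ∑ i ∈ Finset.range (K + 1), (L + i)
        = (∑ i ∈ Finset.range K, (L + (i + 1))) + (L + 0) :=
          Finset.sum_range_succ' (fun i => L + i) K
      _ ≤ (∑ i ∈ Finset.range K, (m + 1 + i)) + m :=
          add_le_add (Finset.sum_le_sum (fun i _ => by omega)) (by omega)
      _ ≤ (∑ q ∈ Q.erase m, q) + m := Nat.add_le_add_right hih m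
      _ = ∑ q ∈ Q, q := by rw [hsum, Nat.add_comm]

lemma sum_ub : ∀ (K R : ℕ) (Q : Finset ℕ), Q.card = K → (∀ q ∈ Q, q ≤ R) →
    ∑ q ∈ Q, q ≤ ∑ i ∈ Finset.range K, (R - i) := by
  intro K
  induction K with
  | zero =>
    intro R Q hcard _
    rw [Finset.card_eq_zero.mp hcard]
    simp
  | succ K ih =>
    intro R Q hcard hR
    have hne : Q.Nonempty := Finset.card_pos.mp (by omega)
    have hmQ : Q.max' hne ∈ Q := Q.max'_mem hne
    set m := Q.max' hne with hm
    have hQ' : (Q.erase m).card = K := by rw [Finset.card_erase_of_mem hmQ, hcard]; omega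
    have hR' : ∀ q ∈ Q.erase m, q ≤ m - 1 := by
      intro q hq
      have h1 := Finset.le_max' Q q (Finset.mem_of_mem_erase hq)
      have h2 := Finset.ne_of_mem_erase hq
      omega
    have hih := ih (m - 1) (Q.erase m) hQ' hR'
    have hsum : ∑ q ∈ Q, q = m + ∑ q ∈ Q.erase m, q :=
      (Finset.add_sum_erase Q (fun q => q) hmQ).symm
    have hmR : m ≤ R := hR m hmQ
    calc ∑ q ∈ Q, q = m + ∑ q ∈ Q.erase m, q := hsum
      _ ≤ m + ∑ i ∈ Finset.range K, (m - 1 - i) := Nat.add_le_add_left hih m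
      _ ≤ R + ∑ i ∈ Finset.range K, (R - 1 - i) :=
          add_le_add hmR (Finset.sum_le_sum (fun i _ => by omega))
      _ = (∑ i ∈ Finset.range K, (R - (i + 1))) + (R - 0) := by
          have hc : ∑ i ∈ Finset.range K, (R - 1 - i) = ∑ i ∈ Finset.range K, (R - (i + 1)) :=
            Finset.sum_congr rfl (fun i _ => by omega)
          rw [hc, Nat.sub_zero, Nat.add_comm]
      _ = ∑ i ∈ Finset.range (K + 1), (R - i) :=
          (Finset.sum_range_succ' (fun i => R - i) K).symm

lemma range_sum_le_cancel {k c1 c2 : ℕ} (hk : 1 ≤ k)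
    (h : ∑ i ∈ Finset.range k, (c1 + i) ≤ ∑ i ∈ Finset.range k, (c2 + i)) : c1 ≤ c2 := by
  rw [Finset.sum_add_distrib, Finset.sum_add_distrib, Finset.sum_const, Finset.sum_const,
    Finset.card_range, smul_eq_mul, smul_eq_mul] at h
  have h2 := Nat.le_of_add_le_add_right h
  exact Nat.le_of_mul_le_mul_left h2 (by omega)

lemma final_core (d1 d2 eL eH k : ℕ) (Q' : Finset ℕ) (hk : Q'.card = k) (hk1 : 1 ≤ k)
    (hsub : ∀ p ∈ Q', d1 + 1 ≤ p ∧ p ≤ d2)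
    (hEH : eH = eL + k)
    (hsum : ∑ p ∈ Finset.Ioc eL eH, p = ∑ p ∈ Q', p) :
    d1 ≤ eL ∧ eH ≤ d2 := by
  have hQsub : Q' ⊆ Finset.Icc (d1 + 1) d2 := fun p hp => Finset.mem_Icc.mpr (hsub p hp)
  have hkd : k ≤ d2 - d1 := by
    have h := Finset.card_le_card hQsub
    rw [hk, Nat.card_Icc] at h
    omega
  have hIoc : ∑ p ∈ Finset.Ioc eL eH, p = ∑ i ∈ Finset.range k, (eL + 1 + i) := by
    rw [hEH, ← Finset.Ico_add_one_add_one_eq_Ioc, Finset.sum_Ico_eq_sum_range]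
    have hc : eL + k + 1 - (eL + 1) = k := by omega
    rw [hc]
  have hlb := sum_lb k (d1 + 1) Q' hk (fun q hq => (hsub q hq).1)
  have hub := sum_ub k d2 Q' hk (fun q hq => (hsub q hq).2)
  have hQeq : ∑ p ∈ Q', p = ∑ i ∈ Finset.range k, (eL + 1 + i) := by rw [← hsum, hIoc]
  have hd1eL : d1 + 1 ≤ eL + 1 := range_sum_le_cancel hk1 (by rw [← hQeq]; exact hlb)
  have hreflect : ∑ i ∈ Finset.range k, (d2 - i) = ∑ i ∈ Finset.range k, (d2 - k + 1 + i) := by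
    rw [← Finset.sum_range_reflect (fun i => d2 - i) k]
    exact Finset.sum_congr rfl (fun i hi => by
      rw [Finset.mem_range] at hi; omega)
  have hup : eL + 1 ≤ d2 - k + 1 := by
    apply range_sum_le_cancel hk1
    rw [← hQeq, ← hreflect]
    exact hub
  constructor
  · omega
  · omega

def gZ (p : ℕ) : ℤ := ∑ l ∈ Finset.Icc 1 p, (l : ℤ)

lemma icc1_eq_ioc0 (p : ℕ) : Finset.Icc 1 p = Finset.Ioc 0 p := by
  ext q; simp [Finset.mem_Icc, Finset.mem_Ioc]; omega

lemma gZ_succ (p : ℕ) : gZ (p + 1) = gZ p + ((p : ℤ) + 1) := by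
  unfold gZ
  rw [Finset.sum_Icc_succ_top (by omega : 1 ≤ p + 1)]
  push_cast
  ring

lemma gZ_mono {p q : ℕ} (h : p ≤ q) : gZ p ≤ gZ q := by
  unfold gZ
  apply Finset.sum_le_sum_of_subset_of_nonneg
  · exact Finset.Icc_subset_Icc_right h
  · intro l hl _
    rw [Finset.mem_Icc] at hl
    positivity

lemma gZ_one_le {p : ℕ} (h : 1 ≤ p) : 1 ≤ gZ p := by
  have h1 : gZ 1 ≤ gZ p := gZ_mono h
  have : gZ 1 = 1 := by unfold gZ; simp
  omega

lemma two_gZ (p : ℕ) : 2 * gZ p = (p : ℤ) * ((p : ℤ) + 1) := by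
  induction p with
  | zero => unfold gZ; simp
  | succ p ih =>
    rw [gZ_succ]
    push_cast
    ring_nf
    ring_nf at ih
    linarith

lemma gZ_diff {u v : ℕ} (h : u ≤ v) :
    gZ v - gZ u = ∑ p ∈ Finset.Ioc u v, (p : ℤ) := by
  have hc := Finset.sum_Ioc_consecutive (fun l => (l : ℤ)) (Nat.zero_le u) h
  unfold gZ
  rw [icc1_eq_ioc0, icc1_eq_ioc0]
  linarith [hc]

lemma gZ_diff_nat {u v : ℕ} (h : u ≤ v) :
    gZ v - gZ u = ((∑ p ∈ Finset.Ioc u v, p : ℕ) : ℤ) := by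
  rw [gZ_diff h]
  push_cast
  rfl

-- the splitting identity
lemma sum_split (c A B : ℕ → ℤ) (n d1 d2 : ℕ) (hd1 : 1 ≤ d1) (h12 : d1 ≤ d2) (hd2 : d2 ≤ n)
    (H1 : ∀ p, 1 ≤ p → p < d1 → A p = B p)
    (H2 : ∀ q, d1 ≤ q → q < d2 → A (q + 1) = B q)
    (H3 : ∀ p, d2 < p → p ≤ n → A p = B p) :
    (∑ p ∈ Finset.Icc 1 n, c p * A p) - (∑ p ∈ Finset.Icc 1 n, c p * B p)
      = c d1 * A d1 - c d2 * B d2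
        + ∑ q ∈ Finset.Ioc (d1 - 1) (d2 - 1), (c (q + 1) - c q) * B q := by
  have e0 : d1 - 1 + 1 = d1 := by omega
  have e2 : d2 - 1 + 1 = d2 := by omega
  have hsingle : ∀ (d : ℕ), 1 ≤ d → Finset.Ioc (d - 1) d = {d} := by
    intro d hd; ext p; simp [Finset.mem_Ioc]; omega
  have hsplitA : ∑ p ∈ Finset.Icc 1 n, c p * A p
      = (∑ p ∈ Finset.Ioc 0 (d1 - 1), c p * A p) + ((∑ p ∈ Finset.Ioc (d1 - 1) d2, c p * A p)
        + ∑ p ∈ Finset.Ioc d2 n, c p * A p) := by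
    rw [Finset.sum_Ioc_consecutive _ (by omega : d1 - 1 ≤ d2) hd2,
      Finset.sum_Ioc_consecutive _ (by omega : 0 ≤ d1 - 1) (by omega : d1 - 1 ≤ n),
      icc1_eq_ioc0]
  have hsplitB : ∑ p ∈ Finset.Icc 1 n, c p * B p
      = (∑ p ∈ Finset.Ioc 0 (d1 - 1), c p * B p) + ((∑ p ∈ Finset.Ioc (d1 - 1) d2, c p * B p)
        + ∑ p ∈ Finset.Ioc d2 n, c p * B p) := by
    rw [Finset.sum_Ioc_consecutive _ (by omega : d1 - 1 ≤ d2) hd2,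
      Finset.sum_Ioc_consecutive _ (by omega : 0 ≤ d1 - 1) (by omega : d1 - 1 ≤ n),
      icc1_eq_ioc0]
  have hout1 : ∑ p ∈ Finset.Ioc 0 (d1 - 1), c p * A p
      = ∑ p ∈ Finset.Ioc 0 (d1 - 1), c p * B p := by
    apply Finset.sum_congr rfl
    intro p hp
    rw [Finset.mem_Ioc] at hp
    rw [H1 p (by omega) (by omega)]
  have hout3 : ∑ p ∈ Finset.Ioc d2 n, c p * A p = ∑ p ∈ Finset.Ioc d2 n, c p * B p := by
    apply Finset.sum_congr rfl
    intro p hp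
    rw [Finset.mem_Ioc] at hp
    rw [H3 p (by omega) (by omega)]
  have hmidA : ∑ p ∈ Finset.Ioc (d1 - 1) d2, c p * A p
      = c d1 * A d1 + ∑ q ∈ Finset.Ioc (d1 - 1) (d2 - 1), c (q + 1) * B q := by
    rw [← Finset.sum_Ioc_consecutive _ (by omega : d1 - 1 ≤ d1) h12]
    congr 1
    · rw [hsingle d1 hd1, Finset.sum_singleton]
    · have hshift := sum_shift_Ioc (d1 - 1) (d2 - 1) (fun p => c p * A p)
      rw [e0, e2] at hshift
      rw [← hshift]
      apply Finset.sum_congr rfl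
      intro q hq
      rw [Finset.mem_Ioc] at hq
      rw [H2 q (by omega) (by omega)]
  have hmidB : ∑ p ∈ Finset.Ioc (d1 - 1) d2, c p * B p
      = (∑ q ∈ Finset.Ioc (d1 - 1) (d2 - 1), c q * B q) + c d2 * B d2 := by
    rw [← Finset.sum_Ioc_consecutive _ (by omega : d1 - 1 ≤ d2 - 1) (by omega : d2 - 1 ≤ d2)]
    congr 1
    rw [hsingle d2 (by omega), Finset.sum_singleton]
  have hsub : ∑ q ∈ Finset.Ioc (d1 - 1) (d2 - 1), (c (q + 1) - c q) * B q
      = (∑ q ∈ Finset.Ioc (d1 - 1) (d2 - 1), c (q + 1) * B q)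
        - ∑ q ∈ Finset.Ioc (d1 - 1) (d2 - 1), c q * B q := by
    rw [← Finset.sum_sub_distrib]
    apply Finset.sum_congr rfl
    intro q _
    ring
  rw [hsplitA, hsplitB, hout1, hout3, hmidA, hmidB, hsub]
  ring

lemma bit_eq_of_cast {u v : Fin 2} (h : ((u : ℕ) : ℤ) = ((v : ℕ) : ℤ)) : u = v := by
  have := u.isLt; have := v.isLt
  exact Fin.ext (by omega)

lemma substAt_invol {n : ℕ} (x : Fin n → Fin 2) (e : ℕ) : substAt (substAt x e) e = x := by
  funext i
  simp only [substAt]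
  by_cases h : (i : ℕ) + 1 = e
  · rw [if_pos h, if_pos h, fin2_sub_sub]
  · rw [if_neg h, if_neg h]

lemma del_rel {n : ℕ} (a b : Fin n → Fin 2) (d1 d2 : ℕ) (hn : 2 ≤ n)
    (hd1 : 1 ≤ d1) (h12 : d1 ≤ d2) (hd2 : d2 ≤ n)
    (h : delAt a d1 = delAt b d2) :
    (∀ p, 1 ≤ p → p < d1 → getBit a p = getBit b p) ∧
    (∀ q, d1 ≤ q → q < d2 → getBit a (q + 1) = getBit b q) ∧
    (∀ p, d2 < p → p ≤ n → getBit a p = getBit b p) := by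
  refine ⟨?_, ?_, ?_⟩
  · intro p hp1 hp2
    have hi := congrFun h ⟨p - 1, by omega⟩
    simp only [delAt] at hi
    rw [if_pos (show p - 1 + 1 < d1 by omega), if_pos (show p - 1 + 1 < d2 by omega)] at hi
    rw [show p - 1 + 1 = p by omega] at hi
    exact hi
  · intro q hq1 hq2
    have hi := congrFun h ⟨q - 1, by omega⟩
    simp only [delAt] at hi
    rw [if_neg (show ¬(q - 1 + 1 < d1) by omega), if_pos (show q - 1 + 1 < d2 by omega)] at hi
    rw [show q - 1 + 2 = q + 1 by omega, show q - 1 + 1 = q by omega] at hi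
    exact hi
  · intro p hp1 hp2
    have hi := congrFun h ⟨p - 2, by omega⟩
    simp only [delAt] at hi
    rw [if_neg (show ¬(p - 2 + 1 < d1) by omega), if_neg (show ¬(p - 2 + 1 < d2) by omega)] at hi
    rw [show p - 2 + 2 = p by omega] at hi
    exact hi

lemma final (n d1 d2 e1 e2 : ℕ) (β : ℕ → ℤ)
    (hβ : ∀ q ∈ Finset.Ioc (d1 - 1) (d2 - 1), β q = 0 ∨ β q = 1)
    (ε : ℤ) (hε : ε = 1 ∨ ε = -1)
    (hd1 : 1 ≤ d1) (h12 : d1 ≤ d2) (hd2 : d2 ≤ n)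
    (hK : ε * ((e1 : ℤ) - e2) = ∑ q ∈ Finset.Ioc (d1 - 1) (d2 - 1), β q)
    (hM : ε * (gZ e1 - gZ e2) = ∑ q ∈ Finset.Ioc (d1 - 1) (d2 - 1), ((q : ℤ) + 1) * β q)
    (hKne : ∑ q ∈ Finset.Ioc (d1 - 1) (d2 - 1), β q ≠ 0) :
    d1 ≤ e1 ∧ e1 ≤ d2 ∧ d1 ≤ e2 ∧ e2 ≤ d2 := by
  classical
  set I := Finset.Ioc (d1 - 1) (d2 - 1) with hI
  set Q : Finset ℕ := I.filter (fun q => β q = 1) with hQdef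
  have hKQ : ∑ q ∈ I, β q = (Q.card : ℤ) := by
    have hc : ∀ q ∈ I, β q = if β q = 1 then (1 : ℤ) else 0 := by
      intro q hq; rcases hβ q hq with h | h <;> simp [h]
    rw [Finset.sum_congr rfl hc, Finset.sum_boole, hQdef]
  have hMQ : ∑ q ∈ I, ((q : ℤ) + 1) * β q = ∑ q ∈ Q, ((q : ℤ) + 1) := by
    rw [hQdef, Finset.sum_filter]
    apply Finset.sum_congr rfl
    intro q hq
    rcases hβ q hq with h | h <;> simp [h]
  set Q' := Q.image (· + 1) with hQ'def
  have hinj : ∀ u ∈ Q, ∀ v ∈ Q, u + 1 = v + 1 → u = v := fun u _ v _ h => by omega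
  have hcard' : Q'.card = Q.card := Finset.card_image_of_injOn (fun u _ v _ h => by omega)
  have hsumQ' : ∑ p ∈ Q', p = ∑ q ∈ Q, (q + 1) := Finset.sum_image hinj
  have hQI : ∀ q ∈ Q, q ∈ I := fun q hq => (Finset.mem_filter.mp hq).1
  have hsub : ∀ p ∈ Q', d1 + 1 ≤ p ∧ p ≤ d2 := by
    intro p hp
    rw [hQ'def, Finset.mem_image] at hp
    obtain ⟨q, hq, rfl⟩ := hp
    have hqI := hQI q hq
    rw [hI, Finset.mem_Ioc] at hqI
    omega
  have hk1 : 1 ≤ Q.card := by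
    rcases Nat.eq_zero_or_pos Q.card with h | h
    · exfalso; apply hKne; rw [hKQ, h]; simp
    · omega
  have hMcast : ∑ q ∈ Q, ((q : ℤ) + 1) = ((∑ p ∈ Q', p : ℕ) : ℤ) := by
    rw [hsumQ']; push_cast; rfl
  rcases hε with hε | hε
  · have hkey : (e1 : ℤ) - e2 = (Q.card : ℤ) := by rw [← hKQ, ← hK, hε, one_mul]
    have he1e2 : e1 = e2 + Q.card := by omega
    have hgd : gZ e1 - gZ e2 = ((∑ p ∈ Finset.Ioc e2 e1, p : ℕ) : ℤ) := gZ_diff_nat (by omega)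
    have hnat : ∑ p ∈ Finset.Ioc e2 e1, p = ∑ p ∈ Q', p := by
      have hh : ((∑ p ∈ Finset.Ioc e2 e1, p : ℕ) : ℤ) = ((∑ p ∈ Q', p : ℕ) : ℤ) := by
        rw [← hgd, ← hMcast, ← hMQ, ← hM, hε, one_mul]
      exact_mod_cast hh
    obtain ⟨hA, hB⟩ := final_core d1 d2 e2 e1 Q.card Q' hcard' hk1 hsub he1e2 hnat
    exact ⟨by omega, hB, hA, by omega⟩
  · have hkey : (e2 : ℤ) - e1 = (Q.card : ℤ) := by
      rw [← hKQ, ← hK, hε]; ring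
    have he2e1 : e2 = e1 + Q.card := by omega
    have hnat : ∑ p ∈ Finset.Ioc e1 e2, p = ∑ p ∈ Q', p := by
      have hgd : gZ e2 - gZ e1 = ((∑ p ∈ Finset.Ioc e1 e2, p : ℕ) : ℤ) := gZ_diff_nat (by omega)
      have hh : ((∑ p ∈ Finset.Ioc e1 e2, p : ℕ) : ℤ) = ((∑ p ∈ Q', p : ℕ) : ℤ) := by
        rw [← hgd, ← hMcast, ← hMQ, ← hM, hε]; ring
      exact_mod_cast hh
    obtain ⟨hA, hB⟩ := final_core d1 d2 e1 e2 Q.card Q' hcard' hk1 hsub he2e1 hnat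
    exact ⟨hA, by omega, by omega, hB⟩

lemma degenerate {n : ℕ} (x x' : Fin n → Fin 2) (e d1 d2 : ℕ) (hn : 2 ≤ n)
    (hd1 : 1 ≤ d1) (h12 : d1 ≤ d2) (hd2 : d2 ≤ n)
    (R1 : ∀ p, 1 ≤ p → p < d1 → getBit (substAt x e) p = getBit (substAt x' e) p)
    (R2 : ∀ q, d1 ≤ q → q < d2 → getBit (substAt x e) (q + 1) = getBit (substAt x' e) q)
    (R3 : ∀ p, d2 < p → p ≤ n → getBit (substAt x e) p = getBit (substAt x' e) p)
    (ht : getBit (substAt x e) d1 = getBit (substAt x' e) d2)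
    (hint : ∀ q, d1 ≤ q → q < d2 → getBit (substAt x' e) q = getBit (substAt x' e) d2) :
    x = x' := by
  have hab : substAt x e = substAt x' e := by
    funext i
    have hlt := i.isLt
    have h1 : 1 ≤ (i : ℕ) + 1 := by omega
    have h2 : (i : ℕ) + 1 ≤ n := by omega
    rw [← getBit_eq' (substAt x e) i, ← getBit_eq' (substAt x' e) i]
    rcases lt_or_ge ((i : ℕ) + 1) d1 with h | h
    · exact R1 _ h1 h
    rcases le_or_gt ((i : ℕ) + 1) d2 with h' | h'
    · have hbp : getBit (substAt x' e) ((i : ℕ) + 1) = getBit (substAt x' e) d2 := by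
        rcases eq_or_lt_of_le h' with he' | hlt'
        · rw [he']
        · exact hint _ h hlt'
      have hap : getBit (substAt x e) ((i : ℕ) + 1) = getBit (substAt x' e) d2 := by
        rcases eq_or_lt_of_le h with he' | hlt'
        · rw [← he']; exact ht
        · have h3 := R2 ((i : ℕ) + 1 - 1) (by omega) (by omega)
          rw [show (i : ℕ) + 1 - 1 + 1 = (i : ℕ) + 1 by omega] at h3
          rw [h3]
          exact hint _ (by omega) (by omega)
      rw [hap]; exact hbp.symm
    · exact R3 _ h' h2
  calc x = substAt (substAt x e) e := (substAt_invol x e).symm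
    _ = substAt (substAt x' e) e := by rw [hab]
    _ = x' := substAt_invol x' e


set_option maxHeartbeats 1600000 in
/-- Lemma 2: if two distinct codewords yield the same corrupted
sequence, the substituted positions lie between the deleted positions. -/
theorem stmt3 (n : ℕ) (hn : 2 ≤ n) (c0 c1 c2 : ℕ)
    (hc0 : c0 < 4) (hc1 : c1 < 2 * n) (hc2 : c2 < 2 * n ^ 2)
    (x x' : Fin n → Fin 2)
    (hx : x ∈ codeC n c0 c1 c2) (hx' : x' ∈ codeC n c0 c1 c2) (hne : x ≠ x')
    (d1 e1 d2 e2 : ℕ)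
    (hd1 : d1 ∈ Finset.Icc 1 n) (he1 : e1 ∈ Finset.Icc 1 n)
    (hd2 : d2 ∈ Finset.Icc 1 n) (he2 : e2 ∈ Finset.Icc 1 n)
    (h1 : d1 ≠ e1) (h2 : d2 ≠ e2) (hle : d1 ≤ d2)
    (hE : delSub x d1 e1 = delSub x' d2 e2) :
    (d1 < e1 ∧ e1 ≤ d2) ∧ (d1 ≤ e2 ∧ e2 < d2) := by
  classical
  rw [Finset.mem_Icc] at hd1 he1 hd2 he2
  simp only [codeC, Finset.mem_filter, Finset.mem_univ, true_and] at hx hx'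
  obtain ⟨-, -, hw, hf1, hf2⟩ := hx
  obtain ⟨-, -, hw', hf1', hf2'⟩ := hx'
  have hE' : delAt (substAt x e1) d1 = delAt (substAt x' e2) d2 := hE
  obtain ⟨R1, R2, R3⟩ := del_rel (substAt x e1) (substAt x' e2) d1 d2 hn hd1.1 hle hd2.2 hE'
  -- cast bounds
  have hcasts : (1:ℤ) ≤ (d1:ℤ) ∧ (d1:ℤ) ≤ (d2:ℤ) ∧ (d2:ℤ) ≤ (n:ℤ) ∧ (1:ℤ) ≤ (e1:ℤ) ∧
      (e1:ℤ) ≤ (n:ℤ) ∧ (1:ℤ) ≤ (e2:ℤ) ∧ (e2:ℤ) ≤ (n:ℤ) ∧ (2:ℤ) ≤ (n:ℤ) := by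
    refine ⟨?_, ?_, ?_, ?_, ?_, ?_, ?_, ?_⟩ <;> exact_mod_cast (by omega)
  obtain ⟨hz1, hz2, hz3, hz4, hz5, hz6, hz7, hz8⟩ := hcasts
  -- bit bounds
  have hbA : 0 ≤ ((getBit (substAt x e1) d1 : ℕ) : ℤ) ∧ ((getBit (substAt x e1) d1 : ℕ) : ℤ) ≤ 1 :=
    ⟨bit_nonneg n _ d1, bit_le n _ d1⟩
  have hbB : 0 ≤ ((getBit (substAt x' e2) d2 : ℕ) : ℤ) ∧ ((getBit (substAt x' e2) d2 : ℕ) : ℤ) ≤ 1 :=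
    ⟨bit_nonneg n _ d2, bit_le n _ d2⟩
  have hbs : 0 ≤ ((getBit x e1 : ℕ) : ℤ) ∧ ((getBit x e1 : ℕ) : ℤ) ≤ 1 :=
    ⟨bit_nonneg n _ e1, bit_le n _ e1⟩
  have hbs' : 0 ≤ ((getBit x' e2 : ℕ) : ℤ) ∧ ((getBit x' e2 : ℕ) : ℤ) ≤ 1 :=
    ⟨bit_nonneg n _ e2, bit_le n _ e2⟩
  -- generic splitting applied to three coefficient functions
  have mk_split := fun (c : ℕ → ℤ) => sum_split c
    (fun p => ((getBit (substAt x e1) p : ℕ) : ℤ)) (fun p => ((getBit (substAt x' e2) p : ℕ) : ℤ))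
    n d1 d2 hd1.1 hle hd2.2
    (fun p ha hb => congrArg (fun v : Fin 2 => ((v : ℕ) : ℤ)) (R1 p ha hb))
    (fun q ha hb => congrArg (fun v : Fin 2 => ((v : ℕ) : ℤ)) (R2 q ha hb))
    (fun p ha hb => congrArg (fun v : Fin 2 => ((v : ℕ) : ℤ)) (R3 p ha hb))
  ---- STEP 1 : weight
  have hdvd0 : (4:ℤ) ∣ ((wt x : ℤ) - (wt x' : ℤ)) := by omega
  have hGa0 := GS_substAt n (fun _ => 1) x e1 he1.1 he1.2
  have hGb0 := GS_substAt n (fun _ => 1) x' e2 he2.1 he2.2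
  have hab0 := mk_split (fun _ => (1:ℤ))
  simp only [sub_self, zero_mul, Finset.sum_const_zero, one_mul, add_zero] at hab0
  simp only [GS, one_mul] at hGa0 hGb0
  have heq0 : (wt x : ℤ) - (wt x' : ℤ) =
      ((getBit (substAt x e1) d1 : ℕ) : ℤ) - ((getBit (substAt x' e2) d2 : ℕ) : ℤ)
      + 2 * ((getBit x e1 : ℕ) : ℤ) - 2 * ((getBit x' e2 : ℕ) : ℤ) := by
    rw [wt_eq n x, wt_eq n x']
    simp only [GS, one_mul]
    linarith [hGa0, hGb0, hab0]
  have h00 : (wt x : ℤ) - (wt x' : ℤ) = 0 := by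
    apply Int.eq_zero_of_abs_lt_dvd hdvd0
    rw [heq0, abs_lt]
    constructor <;> linarith [hbA.1, hbA.2, hbB.1, hbB.2, hbs.1, hbs.2, hbs'.1, hbs'.2]
  have hts : ((getBit (substAt x e1) d1 : ℕ) : ℤ) = ((getBit (substAt x' e2) d2 : ℕ) : ℤ) ∧
      ((getBit x e1 : ℕ) : ℤ) = ((getBit x' e2 : ℕ) : ℤ) := by
    rw [heq0] at h00
    constructor <;> omega
  obtain ⟨htv, hsv⟩ := hts
  ---- STEP 2 : f1
  have hvt1 : ∀ z : Fin n → Fin 2, (vtSyn 1 z : ℤ)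
      = ∑ p ∈ Finset.Icc 1 n, (p : ℤ) * ((getBit z p : ℕ) : ℤ) := by
    intro z
    rw [vtSyn_eq n 1 z]
    simp only [GS]
    apply Finset.sum_congr rfl
    intro p hp
    rw [Finset.mem_Icc] at hp
    congr 1
    simp [Nat.card_Icc]
  have hdvd1 : ((2 * n : ℕ) : ℤ) ∣ ((vtSyn 1 x : ℤ) - (vtSyn 1 x' : ℤ)) := by
    have hmod : vtSyn 1 x' ≡ vtSyn 1 x [MOD 2 * n] := by
      unfold Nat.ModEq; rw [hf1, hf1']
    exact hmod.dvd
  have hGa1 := GS_substAt n (fun p => (p : ℤ)) x e1 he1.1 he1.2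
  have hGb1 := GS_substAt n (fun p => (p : ℤ)) x' e2 he2.1 he2.2
  simp only [GS] at hGa1 hGb1
  have hab1 := mk_split (fun p => (p : ℤ))
  have hS1 : ∑ q ∈ Finset.Ioc (d1 - 1) (d2 - 1),
      (((q + 1 : ℕ) : ℤ) - (q : ℤ)) * ((getBit (substAt x' e2) q : ℕ) : ℤ)
      = ∑ q ∈ Finset.Ioc (d1 - 1) (d2 - 1), ((getBit (substAt x' e2) q : ℕ) : ℤ) := by
    apply Finset.sum_congr rfl
    intro q _
    push_cast
    ring
  rw [hS1] at hab1
  have hSnn : 0 ≤ ∑ q ∈ Finset.Ioc (d1 - 1) (d2 - 1), ((getBit (substAt x' e2) q : ℕ) : ℤ) :=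
    Finset.sum_nonneg (fun q _ => bit_nonneg n _ q)
  have hSle : ∑ q ∈ Finset.Ioc (d1 - 1) (d2 - 1), ((getBit (substAt x' e2) q : ℕ) : ℤ)
      ≤ (d2 : ℤ) - (d1 : ℤ) := by
    calc ∑ q ∈ Finset.Ioc (d1 - 1) (d2 - 1), ((getBit (substAt x' e2) q : ℕ) : ℤ)
        ≤ ∑ _q ∈ Finset.Ioc (d1 - 1) (d2 - 1), (1 : ℤ) :=
          Finset.sum_le_sum (fun q _ => bit_le n _ q)
      _ = (((d2 - 1) - (d1 - 1) : ℕ) : ℤ) := by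
          rw [Finset.sum_const, Nat.card_Ioc, nsmul_eq_mul, mul_one]
      _ ≤ (d2 : ℤ) - (d1 : ℤ) := by omega
  have heq1 : (vtSyn 1 x : ℤ) - (vtSyn 1 x' : ℤ)
      = (d1 : ℤ) * ((getBit (substAt x e1) d1 : ℕ) : ℤ)
        - (d2 : ℤ) * ((getBit (substAt x' e2) d2 : ℕ) : ℤ)
        + (∑ q ∈ Finset.Ioc (d1 - 1) (d2 - 1), ((getBit (substAt x' e2) q : ℕ) : ℤ))
        + (e2 : ℤ) * (1 - 2 * ((getBit x' e2 : ℕ) : ℤ))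
        - (e1 : ℤ) * (1 - 2 * ((getBit x e1 : ℕ) : ℤ)) := by
    rw [hvt1 x, hvt1 x']
    linarith [hGa1, hGb1, hab1]
  have h01 : (vtSyn 1 x : ℤ) - (vtSyn 1 x' : ℤ) = 0 := by
    apply Int.eq_zero_of_abs_lt_dvd hdvd1
    rw [heq1, htv, hsv, abs_lt]
    push_cast
    rcases (by omega : ((getBit (substAt x' e2) d2 : ℕ) : ℤ) = 0
        ∨ ((getBit (substAt x' e2) d2 : ℕ) : ℤ) = 1) with hcA | hcA <;>
      rcases (by omega : ((getBit x' e2 : ℕ) : ℤ) = 0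
          ∨ ((getBit x' e2 : ℕ) : ℤ) = 1) with hcB | hcB <;>
        rw [hcA, hcB] <;> constructor <;> linarith [hSnn, hSle]
  have star1 : (2 * ((getBit x e1 : ℕ) : ℤ) - 1) * ((e1 : ℤ) - (e2 : ℤ))
      + (∑ q ∈ Finset.Ioc (d1 - 1) (d2 - 1), ((getBit (substAt x' e2) q : ℕ) : ℤ))
      = ((d2 : ℤ) - (d1 : ℤ)) * ((getBit (substAt x' e2) d2 : ℕ) : ℤ) := by
    linear_combination h01 - heq1 - (d1 : ℤ) * htv - 2 * (e2 : ℤ) * hsv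
  ---- STEP 3 : f2
  have hvt2 : ∀ z : Fin n → Fin 2, (vtSyn 2 z : ℤ)
      = ∑ p ∈ Finset.Icc 1 n, gZ p * ((getBit z p : ℕ) : ℤ) := by
    intro z
    rw [vtSyn_eq n 2 z]
    simp only [GS]
    apply Finset.sum_congr rfl
    intro p _
    congr 1
    unfold gZ
    norm_num
  have hdvd2 : ((2 * n ^ 2 : ℕ) : ℤ) ∣ ((vtSyn 2 x : ℤ) - (vtSyn 2 x' : ℤ)) := by
    have hmod : vtSyn 2 x' ≡ vtSyn 2 x [MOD 2 * n ^ 2] := by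
      unfold Nat.ModEq; rw [hf2, hf2']
    exact hmod.dvd
  have hGa2 := GS_substAt n gZ x e1 he1.1 he1.2
  have hGb2 := GS_substAt n gZ x' e2 he2.1 he2.2
  simp only [GS] at hGa2 hGb2
  have hab2 := mk_split gZ
  have hS2 : ∑ q ∈ Finset.Ioc (d1 - 1) (d2 - 1),
      (gZ (q + 1) - gZ q) * ((getBit (substAt x' e2) q : ℕ) : ℤ)
      = ∑ q ∈ Finset.Ioc (d1 - 1) (d2 - 1), ((q : ℤ) + 1) * ((getBit (substAt x' e2) q : ℕ) : ℤ) := by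
    apply Finset.sum_congr rfl
    intro q _
    rw [gZ_succ q]
    ring
  rw [hS2] at hab2
  have hTnn : 0 ≤ ∑ q ∈ Finset.Ioc (d1 - 1) (d2 - 1),
      ((q : ℤ) + 1) * ((getBit (substAt x' e2) q : ℕ) : ℤ) :=
    Finset.sum_nonneg (fun q _ => mul_nonneg (by positivity) (bit_nonneg n _ q))
  have hcoef : ∑ q ∈ Finset.Ioc (d1 - 1) (d2 - 1), ((q : ℤ) + 1) = gZ d2 - gZ d1 := by
    rw [gZ_diff hle]
    have hsh := sum_shift_Ioc (d1 - 1) (d2 - 1) (fun p => (p : ℤ))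
    rw [show d1 - 1 + 1 = d1 by omega, show d2 - 1 + 1 = d2 by omega] at hsh
    rw [← hsh]
    apply Finset.sum_congr rfl
    intro q _
    push_cast
    ring
  have hTle : ∑ q ∈ Finset.Ioc (d1 - 1) (d2 - 1),
      ((q : ℤ) + 1) * ((getBit (substAt x' e2) q : ℕ) : ℤ) ≤ gZ d2 - gZ d1 := by
    rw [← hcoef]
    apply Finset.sum_le_sum
    intro q _
    have hq := mul_le_mul_of_nonneg_left (bit_le n (substAt x' e2) q)
      (show (0 : ℤ) ≤ (q : ℤ) + 1 by positivity)
    simpa using hq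
  have hgd1 : 1 ≤ gZ d1 := gZ_one_le hd1.1
  have hgd2 : gZ d2 ≤ gZ n := gZ_mono hd2.2
  have hgd12 : gZ d1 ≤ gZ d2 := gZ_mono hle
  have hge1a : 1 ≤ gZ e1 := gZ_one_le he1.1
  have hge1b : gZ e1 ≤ gZ n := gZ_mono he1.2
  have hge2a : 1 ≤ gZ e2 := gZ_one_le he2.1
  have hge2b : gZ e2 ≤ gZ n := gZ_mono he2.2
  have htwo : 2 * gZ n = (n : ℤ) * ((n : ℤ) + 1) := two_gZ n
  have hnsq : 2 * (n : ℤ) ≤ (n : ℤ) ^ 2 := by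
    have h := mul_le_mul_of_nonneg_right hz8 (show (0:ℤ) ≤ (n:ℤ) by linarith)
    rw [sq]; exact h
  have heq2 : (vtSyn 2 x : ℤ) - (vtSyn 2 x' : ℤ)
      = gZ d1 * ((getBit (substAt x e1) d1 : ℕ) : ℤ)
        - gZ d2 * ((getBit (substAt x' e2) d2 : ℕ) : ℤ)
        + (∑ q ∈ Finset.Ioc (d1 - 1) (d2 - 1), ((q : ℤ) + 1) * ((getBit (substAt x' e2) q : ℕ) : ℤ))
        + gZ e2 * (1 - 2 * ((getBit x' e2 : ℕ) : ℤ))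
        - gZ e1 * (1 - 2 * ((getBit x e1 : ℕ) : ℤ)) := by
    rw [hvt2 x, hvt2 x']
    linarith [hGa2, hGb2, hab2]
  have h02 : (vtSyn 2 x : ℤ) - (vtSyn 2 x' : ℤ) = 0 := by
    apply Int.eq_zero_of_abs_lt_dvd hdvd2
    rw [heq2, htv, hsv, abs_lt]
    push_cast
    rcases (by omega : ((getBit (substAt x' e2) d2 : ℕ) : ℤ) = 0
        ∨ ((getBit (substAt x' e2) d2 : ℕ) : ℤ) = 1) with hcA | hcA <;>
      rcases (by omega : ((getBit x' e2 : ℕ) : ℤ) = 0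
          ∨ ((getBit x' e2 : ℕ) : ℤ) = 1) with hcB | hcB <;>
        rw [hcA, hcB] <;> constructor <;>
          linarith [hTnn, hTle, hgd1, hgd2, hgd12, hge1a, hge1b, hge2a, hge2b, htwo, hnsq]
  have star2 : (2 * ((getBit x e1 : ℕ) : ℤ) - 1) * (gZ e1 - gZ e2)
      + (∑ q ∈ Finset.Ioc (d1 - 1) (d2 - 1), ((q : ℤ) + 1) * ((getBit (substAt x' e2) q : ℕ) : ℤ))
      = (gZ d2 - gZ d1) * ((getBit (substAt x' e2) d2 : ℕ) : ℤ) := by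
    linear_combination h02 - heq2 - gZ d1 * htv - 2 * gZ e2 * hsv
  ---- STEP 4 : case analysis
  suffices hcon : d1 ≤ e1 ∧ e1 ≤ d2 ∧ d1 ≤ e2 ∧ e2 ≤ d2 by
    obtain ⟨hA, hB, hC, hD⟩ := hcon
    exact ⟨⟨by omega, hB⟩, hC, by omega⟩
  have hB01 : ((getBit (substAt x' e2) d2 : ℕ) : ℤ) = 0
      ∨ ((getBit (substAt x' e2) d2 : ℕ) : ℤ) = 1 := by omega
  have hs01 : ((getBit x e1 : ℕ) : ℤ) = 0 ∨ ((getBit x e1 : ℕ) : ℤ) = 1 := by omega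
  rcases hB01 with ht0 | ht1
  · -- t = 0 : β q = B q
    rw [ht0, mul_zero] at star1 star2
    by_cases hS0 : (∑ q ∈ Finset.Ioc (d1 - 1) (d2 - 1), ((getBit (substAt x' e2) q : ℕ) : ℤ)) = 0
    · exfalso
      apply hne
      have he12 : e1 = e2 := by
        rw [hS0] at star1
        rcases hs01 with h | h <;> rw [h] at star1 <;> omega
      subst he12
      apply degenerate x x' e1 d1 d2 hn hd1.1 hle hd2.2 R1 R2 R3 (bit_eq_of_cast htv)
      intro q hq1 hq2
      apply bit_eq_of_cast
      have hq0 : ((getBit (substAt x' e1) q : ℕ) : ℤ) = 0 :=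
        (Finset.sum_eq_zero_iff_of_nonneg (fun q _ => bit_nonneg n _ q)).mp hS0 q
          (by rw [Finset.mem_Ioc]; omega)
      rw [hq0, ht0]
    · have hKh : (1 - 2 * ((getBit x e1 : ℕ) : ℤ)) * ((e1 : ℤ) - (e2 : ℤ))
          = ∑ q ∈ Finset.Ioc (d1 - 1) (d2 - 1), ((getBit (substAt x' e2) q : ℕ) : ℤ) := by
        linear_combination -star1
      have hMh : (1 - 2 * ((getBit x e1 : ℕ) : ℤ)) * (gZ e1 - gZ e2)
          = ∑ q ∈ Finset.Ioc (d1 - 1) (d2 - 1),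
              ((q : ℤ) + 1) * ((getBit (substAt x' e2) q : ℕ) : ℤ) := by
        linear_combination -star2
      exact final n d1 d2 e1 e2 (fun q => ((getBit (substAt x' e2) q : ℕ) : ℤ))
        (fun q _ => by
          have hb := (getBit (substAt x' e2) q).isLt
          show ((getBit (substAt x' e2) q : ℕ) : ℤ) = 0
            ∨ ((getBit (substAt x' e2) q : ℕ) : ℤ) = 1
          omega)
        (1 - 2 * ((getBit x e1 : ℕ) : ℤ)) (by omega)
        hd1.1 hle hd2.2 hKh hMh hS0
  · -- t = 1 : β q = 1 - B q
    rw [ht1, mul_one] at star1 star2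
    have hcard : (((Finset.Ioc (d1 - 1) (d2 - 1)).card : ℕ) : ℤ) = (d2 : ℤ) - (d1 : ℤ) := by
      rw [Nat.card_Ioc]; omega
    have hsplit : ∑ q ∈ Finset.Ioc (d1 - 1) (d2 - 1),
        ((1 : ℤ) - ((getBit (substAt x' e2) q : ℕ) : ℤ))
        = ((d2 : ℤ) - (d1 : ℤ))
          - ∑ q ∈ Finset.Ioc (d1 - 1) (d2 - 1), ((getBit (substAt x' e2) q : ℕ) : ℤ) := by
      rw [Finset.sum_sub_distrib, Finset.sum_const, nsmul_eq_mul, mul_one, hcard]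
    have hsplit2 : ∑ q ∈ Finset.Ioc (d1 - 1) (d2 - 1),
        ((q : ℤ) + 1) * ((1 : ℤ) - ((getBit (substAt x' e2) q : ℕ) : ℤ))
        = (gZ d2 - gZ d1)
          - ∑ q ∈ Finset.Ioc (d1 - 1) (d2 - 1),
              ((q : ℤ) + 1) * ((getBit (substAt x' e2) q : ℕ) : ℤ) := by
      have hpt : ∀ q ∈ Finset.Ioc (d1 - 1) (d2 - 1),
          ((q : ℤ) + 1) * ((1 : ℤ) - ((getBit (substAt x' e2) q : ℕ) : ℤ))
          = ((q : ℤ) + 1) - ((q : ℤ) + 1) * ((getBit (substAt x' e2) q : ℕ) : ℤ) :=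
        fun q _ => by ring
      rw [Finset.sum_congr rfl hpt, Finset.sum_sub_distrib, hcoef]
    by_cases hS0 : (∑ q ∈ Finset.Ioc (d1 - 1) (d2 - 1),
        ((1 : ℤ) - ((getBit (substAt x' e2) q : ℕ) : ℤ))) = 0
    · exfalso
      apply hne
      have hSfull : ∑ q ∈ Finset.Ioc (d1 - 1) (d2 - 1), ((getBit (substAt x' e2) q : ℕ) : ℤ)
          = (d2 : ℤ) - (d1 : ℤ) := by
        rw [hsplit] at hS0; linarith
      have he12 : e1 = e2 := by
        rw [hSfull] at star1
        rcases hs01 with h | h <;> rw [h] at star1 <;> omega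
      subst he12
      apply degenerate x x' e1 d1 d2 hn hd1.1 hle hd2.2 R1 R2 R3 (bit_eq_of_cast htv)
      intro q hq1 hq2
      apply bit_eq_of_cast
      have hq0 : ((1 : ℤ) - ((getBit (substAt x' e1) q : ℕ) : ℤ)) = 0 :=
        (Finset.sum_eq_zero_iff_of_nonneg
          (fun q _ => by have hb := bit_le n (substAt x' e1) q; linarith)).mp hS0 q
          (by rw [Finset.mem_Ioc]; omega)
      rw [ht1]
      omega
    · have hKh : (2 * ((getBit x e1 : ℕ) : ℤ) - 1) * ((e1 : ℤ) - (e2 : ℤ))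
          = ∑ q ∈ Finset.Ioc (d1 - 1) (d2 - 1),
              ((1 : ℤ) - ((getBit (substAt x' e2) q : ℕ) : ℤ)) := by
        rw [hsplit]
        linear_combination star1
      have hMh : (2 * ((getBit x e1 : ℕ) : ℤ) - 1) * (gZ e1 - gZ e2)
          = ∑ q ∈ Finset.Ioc (d1 - 1) (d2 - 1),
              ((q : ℤ) + 1) * ((1 : ℤ) - ((getBit (substAt x' e2) q : ℕ) : ℤ)) := by
        rw [hsplit2]
        linear_combination star2
      exact final n d1 d2 e1 e2 (fun q => (1 : ℤ) - ((getBit (substAt x' e2) q : ℕ) : ℤ))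
        (fun q _ => by
          have hb := (getBit (substAt x' e2) q).isLt
          show (1 : ℤ) - ((getBit (substAt x' e2) q : ℕ) : ℤ) = 0
            ∨ (1 : ℤ) - ((getBit (substAt x' e2) q : ℕ) : ℤ) = 1
          omega)
        (2 * ((getBit x e1 : ℕ) : ℤ) - 1) (by omega)
        hd1.1 hle hd2.2 hKh hMh hS0
end

section
/- Let n ≥ 2 and let x, x' ∈ {0,1}^n satisfy wt(x) ≡ wt(x') (mod 4). Suppose d_1, e_1, d_2, e_2 ∈ {1,…,n} with d_1 ≠ e_1 and d_2 ≠ e_2 such that E(x, d_1, e_1) = E(x', d_2, e_2). Then wt(x) = wt(x'), x_{d_1} = x'_{d_2}, and x_{e_1} = x'_{e_2}. -/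
lemma key_sum (g : ℕ → ℕ) : ∀ n d : ℕ, 1 ≤ d → d ≤ n →
    (∑ i ∈ Finset.range (n-1), (if i+1 < d then g (i+1) else g (i+2))) + g d
      = ∑ i ∈ Finset.range n, g (i+1) := by
  intro n
  induction n with
  | zero => intro d _ _; omega
  | succ n ih =>
    intro d h1 h2
    rcases Nat.lt_or_ge d (n+1) with hd | hd
    · have hn : 1 ≤ n := by omega
      have hdn : d ≤ n := by omega
      rw [Finset.sum_range_succ]
      rw [show n + 1 - 1 = (n - 1) + 1 by omega, Finset.sum_range_succ]
      rw [if_neg (by omega : ¬ (n - 1 + 1 < d)), show n - 1 + 1 + 1 = n + 1 by omega]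
      rw [← ih d h1 hdn]
      ring
    · have hd' : d = n + 1 := by omega
      subst hd'
      rw [Finset.sum_range_succ]
      congr 1
      apply Finset.sum_congr rfl
      intro i hi
      rw [if_pos (by have := Finset.mem_range.mp hi; omega)]

lemma wt_eq_s9 {n : ℕ} (x : Fin n → Fin 2) :
    wt x = ∑ i ∈ Finset.range n, ((getBit x (i+1) : Fin 2) : ℕ) := by
  rw [wt]
  have : ∀ i : Fin n, ((x i : ℕ)) = (fun p => ((getBit x (p+1) : Fin 2) : ℕ)) (i : ℕ) := by
    intro i
    simp [getBit, i.isLt]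
  rw [Finset.sum_congr rfl (fun i _ => this i)]
  exact Fin.sum_univ_eq_sum_range (fun p => ((getBit x (p+1) : Fin 2) : ℕ)) n

lemma wt_delAt {n : ℕ} (x : Fin n → Fin 2) (d : ℕ) (h1 : 1 ≤ d) (h2 : d ≤ n) :
    wt (delAt x d) + (getBit x d : ℕ) = wt x := by
  rw [wt_eq_s9 x, wt_eq_s9 (delAt x d), ← key_sum (fun p => (getBit x p : ℕ)) n d h1 h2]
  congr 1
  apply Finset.sum_congr rfl
  intro i hi
  have hi' : i < n - 1 := Finset.mem_range.mp hi
  simp only [getBit]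
  rw [dif_pos (by omega : i + 1 - 1 < n - 1)]
  show (delAt x d ⟨i, by omega⟩ : ℕ) = _
  simp only [delAt]
  split <;> simp [getBit]

lemma wt_substAt {n : ℕ} (x : Fin n → Fin 2) (e : ℕ) (h1 : 1 ≤ e) (h2 : e ≤ n) :
    wt (substAt x e) + 2 * (getBit x e : ℕ) = wt x + 1 := by
  have he : e - 1 < n := by omega
  set i0 : Fin n := ⟨e - 1, he⟩
  have hgb : getBit x e = x i0 := by simp [getBit, he]; rfl
  have hx : ∀ i : Fin n, i ≠ i0 → substAt x e i = x i := by
    intro i hi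
    simp only [substAt]
    rw [if_neg]
    intro hc
    exact hi (Fin.ext (show (i : ℕ) = e - 1 by omega))
  have hx0 : substAt x e i0 = 1 - x i0 := by
    simp only [substAt]
    rw [if_pos (show e - 1 + 1 = e by omega)]
  have hsum1 : wt (substAt x e) =
      (∑ i ∈ Finset.univ.erase i0, (x i : ℕ)) + ((1 - x i0 : Fin 2) : ℕ) := by
    rw [wt, ← Finset.sum_erase_add _ _ (Finset.mem_univ i0), hx0]
    congr 1
    apply Finset.sum_congr rfl
    intro i hi
    rw [hx i (Finset.mem_erase.mp hi).1]
  have hsum2 : wt x = (∑ i ∈ Finset.univ.erase i0, (x i : ℕ)) + (x i0 : ℕ) := by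
    rw [wt, ← Finset.sum_erase_add _ _ (Finset.mem_univ i0)]
  have hv : ((1 - x i0 : Fin 2) : ℕ) = 1 - (x i0 : ℕ) := by
    revert hx0
    generalize x i0 = b
    intro _
    fin_cases b <;> rfl
  have hle : (x i0 : ℕ) ≤ 1 := Nat.lt_succ_iff.mp (x i0).isLt
  rw [hgb, hsum1, hsum2, hv]
  omega

lemma getBit_substAt_ne {n : ℕ} (x : Fin n → Fin 2) (d e : ℕ) (h1 : 1 ≤ d)
    (hne : d ≠ e) : getBit (substAt x e) d = getBit x d := by
  simp only [getBit]
  split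
  · simp only [substAt]
    rw [if_neg (by omega)]
  · rfl

lemma wt_delSub {n : ℕ} (x : Fin n → Fin 2) (d e : ℕ) (hd1 : 1 ≤ d) (hd2 : d ≤ n)
    (he1 : 1 ≤ e) (he2 : e ≤ n) (hne : d ≠ e) :
    wt (delSub x d e) + (getBit x d : ℕ) + 2 * (getBit x e : ℕ) = wt x + 1 := by
  have h1 := wt_delAt (substAt x e) d hd1 hd2
  rw [getBit_substAt_ne x d e hd1 hne] at h1
  have h2 := wt_substAt x e he1 he2
  simp only [delSub]
  omega

/-- Remark 3: if `wt(x) ≡ wt(x') (mod 4)` and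
`E(x,d1,e1) = E(x',d2,e2)`, then `wt(x) = wt(x')`, `x_{d1} = x'_{d2}` and
`x_{e1} = x'_{e2}`. -/
theorem stmt9 (n : ℕ) (hn : 2 ≤ n) (x x' : Fin n → Fin 2)
    (hwt : wt x ≡ wt x' [MOD 4])
    (d1 e1 d2 e2 : ℕ)
    (hd1 : d1 ∈ Finset.Icc 1 n) (he1 : e1 ∈ Finset.Icc 1 n)
    (hd2 : d2 ∈ Finset.Icc 1 n) (he2 : e2 ∈ Finset.Icc 1 n)
    (h1 : d1 ≠ e1) (h2 : d2 ≠ e2)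
    (hE : delSub x d1 e1 = delSub x' d2 e2) :
    wt x = wt x' ∧ getBit x d1 = getBit x' d2 ∧ getBit x e1 = getBit x' e2 := by
  simp only [Finset.mem_Icc] at hd1 he1 hd2 he2
  have k1 := wt_delSub x d1 e1 hd1.1 hd1.2 he1.1 he1.2 h1
  have k2 := wt_delSub x' d2 e2 hd2.1 hd2.2 he2.1 he2.2 h2
  have hw : wt (delSub x d1 e1) = wt (delSub x' d2 e2) := by rw [hE]
  have hm : wt x % 4 = wt x' % 4 := hwt
  have la1 : (getBit x d1 : ℕ) ≤ 1 := by omega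
  have la2 : (getBit x' d2 : ℕ) ≤ 1 := by omega
  have lb1 : (getBit x e1 : ℕ) ≤ 1 := by omega
  have lb2 : (getBit x' e2 : ℕ) ≤ 1 := by omega
  refine ⟨by omega, Fin.ext (by omega), Fin.ext (by omega)⟩
end
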